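/- arXiv:2012.15659 — 11 statements merged into one kernel-verified Lean document; each statement's English description precedes it below -/
import Mathlib

section
/- Let m ≥ 1 and let A be an invertible m×m complex matrix all of whose eigenvalues have modulus 1. Then there is a constant C > 0 such that for every nonzero integer n, ‖A^n‖ ≤ C·|n|^{m−1}, where A^n denotes the n-th power of A in GL_m(ℂ) (including negative powers) and ‖·‖ is the Frobenius (Euclidean) matrix norm. -/
open Polynomial

attribute [local instance] Matrix.frobeniusSeminormedAddCommGroup
  Matrix.frobeniusNormedAddCommGroup Matrix.frobeniusNormedRing Matrix.frobeniusNormedSpace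

  Matrix.frobeniusNormedAddCommGroup Matrix.frobeniusNormedRing Matrix.frobeniusNormedSpace

lemma bezout_aux (k : ℂ → ℕ) (S : Finset ℂ) (hS : S.Nonempty) :
    ∃ q : ℂ → Polynomial ℂ,
      ∑ μ ∈ S, q μ * ∏ ν ∈ S.erase μ, (X - C ν) ^ (k ν) = 1 := by
  classical
  induction S using Finset.cons_induction with
  | empty => exact absurd hS (by simp)
  | cons a s ha ih =>
    rcases s.eq_empty_or_nonempty with rfl | hs
    · exact ⟨fun _ => 1, by simp⟩
    · obtain ⟨q, hq⟩ := ih hs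
      have hcop : IsCoprime ((X - C a) ^ (k a)) (∏ ν ∈ s, (X - C ν) ^ (k ν)) := by
        refine IsCoprime.pow_left (IsCoprime.prod_right fun ν hν => ?_)
        refine IsCoprime.pow_right (Polynomial.isCoprime_X_sub_C_of_isUnit_sub ?_)
        exact (sub_ne_zero.mpr (show a ≠ ν by rintro rfl; exact ha hν)).isUnit
      obtain ⟨u, v, huv⟩ := hcop
      refine ⟨fun μ => if μ = a then v else u * q μ, ?_⟩
      rw [Finset.sum_cons, Finset.erase_cons]
      have h2 : ∀ μ ∈ s, ((Finset.cons a s ha).erase μ) = insert a (s.erase μ) := by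
        intro μ hμ
        rw [Finset.cons_eq_insert, Finset.erase_insert_of_ne (show a ≠ μ by rintro rfl; exact ha hμ)]
      calc (if a = a then v else u * q a) * ∏ ν ∈ s, (X - C ν) ^ k ν
            + ∑ μ ∈ s, (if μ = a then v else u * q μ) * ∏ ν ∈ (Finset.cons a s ha).erase μ, (X - C ν) ^ k ν
          = v * ∏ ν ∈ s, (X - C ν) ^ k ν
            + u * (X - C a) ^ k a * ∑ μ ∈ s, q μ * ∏ ν ∈ s.erase μ, (X - C ν) ^ k ν := by
            rw [if_pos rfl, Finset.mul_sum]
            congr 1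
            refine Finset.sum_congr rfl fun μ hμ => ?_
            rw [if_neg (show μ ≠ a by rintro rfl; exact ha hμ), h2 μ hμ,
              Finset.prod_insert (fun h => ha (Finset.mem_of_mem_erase h))]
            ring
        _ = 1 := by rw [hq, mul_one, add_comm]; exact huv

lemma pow_norm_le {m : ℕ} (hm : 1 ≤ m) (B : Matrix (Fin m) (Fin m) ℂ)
    (hev : ∀ μ : ℂ, B.charpoly.IsRoot μ → ‖μ‖ = 1) :
    ∃ C > (0:ℝ), ∀ n : ℕ, 1 ≤ n → ‖B ^ n‖ ≤ C * (n:ℝ) ^ (m - 1) := by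
  classical
  set p := B.charpoly with hp
  have hmonic : p.Monic := B.charpoly_monic
  have hpne : p ≠ 0 := hmonic.ne_zero
  have hdeg : p.natDegree = m := by
    rw [hp, Matrix.charpoly_natDegree_eq_dim, Fintype.card_fin]
  have hsplit : p.Splits := IsAlgClosed.splits p
  have hcard : p.roots.card = m := by
    rw [(Polynomial.splits_iff_card_roots).mp hsplit, hdeg]
  set S := p.roots.toFinset with hS
  have hSne : S.Nonempty := by
    rw [hS, Multiset.toFinset_nonempty]
    intro h
    rw [h] at hcard
    simp at hcard
    omega
  set k : ℂ → ℕ := fun μ => p.roots.count μ with hk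
  have hfact : ∏ μ ∈ S, (X - C μ) ^ (k μ) = p := by
    conv_rhs => rw [hsplit.eq_prod_roots_of_monic hmonic]
    rw [Finset.prod_multiset_map_count]
  obtain ⟨q, hq⟩ := bezout_aux k S hSne
  set P : ℂ → Matrix (Fin m) (Fin m) ℂ :=
    fun μ => aeval B (q μ * ∏ ν ∈ S.erase μ, (X - C ν) ^ (k ν)) with hP
  have hP1 : ∑ μ ∈ S, P μ = 1 := by
    rw [hP, ← map_sum, hq, map_one]
  have hXC : ∀ μ : ℂ, aeval B (X - C μ) = B - μ • 1 := by
    intro μ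
    simp [Algebra.algebraMap_eq_smul_one]
  have hvanish : ∀ μ ∈ S, (B - μ • 1) ^ (k μ) * P μ = 0 := by
    intro μ hμ
    rw [← hXC, ← map_pow, hP, ← map_mul]
    have h3 : (X - C μ) ^ k μ * (q μ * ∏ ν ∈ S.erase μ, (X - C ν) ^ k ν) = q μ * p := by
      rw [← hfact, ← Finset.mul_prod_erase S _ hμ]
      ring
    rw [h3, map_mul]
    rw [hp] at *
    rw [Matrix.aeval_self_charpoly, mul_zero]
  set D : ℝ := ∑ μ ∈ S, ∑ j ∈ Finset.range m, ‖(B - μ • 1) ^ j * P μ‖ with hD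
  have hD0 : 0 ≤ D :=
    Finset.sum_nonneg fun _ _ => Finset.sum_nonneg fun _ _ => norm_nonneg _
  refine ⟨D + 1, by linarith, fun n hn => ?_⟩
  have hn1 : (1:ℝ) ≤ (n:ℝ) := by exact_mod_cast hn
  have hpow0 : (0:ℝ) ≤ (n:ℝ) ^ (m-1) := pow_nonneg (by linarith) _
  have key : ∀ μ ∈ S, ‖B ^ n * P μ‖
      ≤ (n:ℝ) ^ (m-1) * ∑ j ∈ Finset.range m, ‖(B - μ • 1) ^ j * P μ‖ := by
    intro μ hμ
    have habs : ‖μ‖ = 1 :=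
      hev μ (Polynomial.isRoot_of_mem_roots (Multiset.mem_toFinset.mp hμ))
    have hcomm : Commute (B - μ • 1) (μ • 1) := (Commute.one_right _).smul_right μ
    have hcast : ∀ i : ℕ, ((n.choose i : ℕ) : Matrix (Fin m) (Fin m) ℂ)
        = (n.choose i : ℂ) • (1 : Matrix (Fin m) (Fin m) ℂ) := by
      intro i
      rw [← map_natCast (algebraMap ℂ (Matrix (Fin m) (Fin m) ℂ)) (n.choose i),
        Algebra.algebraMap_eq_smul_one]
    have hbin : B ^ n * P μ = ∑ i ∈ Finset.range (n+1),
        ((n.choose i : ℂ) * μ ^ (n - i)) • ((B - μ • 1) ^ i * P μ) := by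
      conv_lhs => rw [show B = (B - μ • 1) + μ • 1 by abel]
      rw [hcomm.add_pow, Finset.sum_mul]
      refine Finset.sum_congr rfl fun i hi => ?_
      rw [_root_.smul_pow, one_pow, hcast i]
      simp only [mul_smul_comm, smul_mul_assoc, mul_one, smul_smul]
    rw [hbin]
    refine le_trans (norm_sum_le _ _) ?_
    have hterm : ∀ i ∈ Finset.range (n+1),
        ‖((n.choose i : ℂ) * μ ^ (n - i)) • ((B - μ • 1) ^ i * P μ)‖
          = (n.choose i : ℝ) * ‖(B - μ • 1) ^ i * P μ‖ := by
      intro i _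
      rw [norm_smul]
      congr 1
      rw [norm_mul, norm_pow, habs, one_pow, mul_one, Complex.norm_natCast]
    rw [Finset.sum_congr rfl hterm]
    have hzero : ∀ i, k μ ≤ i → (B - μ • 1) ^ i * P μ = 0 := by
      intro i hik
      rw [show i = (i - k μ) + k μ by omega, pow_add, mul_assoc, hvanish μ hμ, mul_zero]
    have hkm : k μ ≤ m := by
      calc k μ ≤ p.roots.card := Multiset.count_le_card _ _
        _ = m := hcard
    calc ∑ i ∈ Finset.range (n+1), (n.choose i : ℝ) * ‖(B - μ • 1) ^ i * P μ‖
        = ∑ i ∈ (Finset.range (n+1)).filter (fun i => i < k μ),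
            (n.choose i : ℝ) * ‖(B - μ • 1) ^ i * P μ‖ := by
          refine (Finset.sum_filter_of_ne ?_).symm
          intro i _ hne
          by_contra hik
          exact hne (by rw [hzero i (by omega), norm_zero, mul_zero])
      _ ≤ ∑ i ∈ (Finset.range (n+1)).filter (fun i => i < k μ),
            (n:ℝ) ^ (m-1) * ‖(B - μ • 1) ^ i * P μ‖ := by
          refine Finset.sum_le_sum fun i hi => ?_
          have hikm : i ≤ m - 1 := by
            have := (Finset.mem_filter.mp hi).2
            omega
          refine mul_le_mul_of_nonneg_right ?_ (norm_nonneg _)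
          calc (n.choose i : ℝ) ≤ (n:ℝ) ^ i := by exact_mod_cast Nat.choose_le_pow n i
            _ ≤ (n:ℝ) ^ (m-1) := pow_le_pow_right₀ hn1 hikm
      _ ≤ ∑ i ∈ Finset.range m, (n:ℝ) ^ (m-1) * ‖(B - μ • 1) ^ i * P μ‖ := by
          refine Finset.sum_le_sum_of_subset_of_nonneg ?_ ?_
          · intro i hi
            rw [Finset.mem_range]
            have := (Finset.mem_filter.mp hi).2
            omega
          · intro i _ _
            positivity
      _ = (n:ℝ) ^ (m-1) * ∑ j ∈ Finset.range m, ‖(B - μ • 1) ^ j * P μ‖ := by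
          rw [Finset.mul_sum]
  calc ‖B ^ n‖ = ‖∑ μ ∈ S, B ^ n * P μ‖ := by rw [← Finset.mul_sum, hP1, mul_one]
    _ ≤ ∑ μ ∈ S, ‖B ^ n * P μ‖ := norm_sum_le _ _
    _ ≤ ∑ μ ∈ S, (n:ℝ) ^ (m-1) * ∑ j ∈ Finset.range m, ‖(B - μ • 1) ^ j * P μ‖ :=
        Finset.sum_le_sum key
    _ = (n:ℝ) ^ (m-1) * D := by rw [hD, Finset.mul_sum]
    _ ≤ (D + 1) * (n:ℝ) ^ (m-1) := by nlinarith

lemma eval_charpoly' {m : ℕ} (M : Matrix (Fin m) (Fin m) ℂ) (t : ℂ) :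
    M.charpoly.eval t = (t • (1 : Matrix (Fin m) (Fin m) ℂ) - M).det := by
  rw [Matrix.charpoly, ← Polynomial.coe_evalRingHom, RingHom.map_det]
  congr 1
  ext i j
  by_cases h : i = j <;>
    simp [Matrix.charmatrix_apply, h, Matrix.one_apply, Matrix.diagonal_apply]

lemma inv_charpoly_root {m : ℕ} (A : GL (Fin m) ℂ)
    (hev : ∀ μ : ℂ, (Matrix.charpoly (A : Matrix (Fin m) (Fin m) ℂ)).IsRoot μ →
      ‖μ‖ = 1)
    (μ : ℂ) (hroot : (Matrix.charpoly ((A⁻¹ : GL (Fin m) ℂ) : Matrix (Fin m) (Fin m) ℂ)).IsRoot μ) :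
    ‖μ‖ = 1 := by
  set Av : Matrix (Fin m) (Fin m) ℂ := (A : Matrix (Fin m) (Fin m) ℂ) with hAv
  set B : Matrix (Fin m) (Fin m) ℂ := ((A⁻¹ : GL (Fin m) ℂ) : Matrix (Fin m) (Fin m) ℂ) with hB
  have hAB : Av * B = 1 := by
    rw [hAv, hB, ← Units.val_mul, mul_inv_cancel, Units.val_one]
  have hdet : (μ • (1 : Matrix (Fin m) (Fin m) ℂ) - B).det = 0 := by
    rw [← eval_charpoly']
    exact hroot
  have hBdet : B.det ≠ 0 := by
    have : IsUnit B := (A⁻¹).isUnit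
    exact ((Matrix.isUnit_iff_isUnit_det B).mp this).ne_zero
  have hμ0 : μ ≠ 0 := by
    rintro rfl
    rw [zero_smul, zero_sub, Matrix.det_neg] at hdet
    rcases mul_eq_zero.mp hdet with h | h
    · exact pow_ne_zero _ (by norm_num : (-1 : ℂ) ≠ 0) h
    · exact hBdet h
  have h1 : (μ • Av - 1).det = 0 := by
    have : Av * (μ • (1 : Matrix (Fin m) (Fin m) ℂ) - B) = μ • Av - 1 := by
      rw [mul_sub, hAB, Matrix.mul_smul, mul_one]
    rw [← this, Matrix.det_mul, hdet, mul_zero]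
  have h2 : μ • Av - 1 = μ • (Av - μ⁻¹ • 1) := by
    rw [smul_sub, smul_smul, mul_inv_cancel₀ hμ0, one_smul]
  rw [h2, Matrix.det_smul] at h1
  have h3 : (Av - μ⁻¹ • 1).det = 0 := by
    rcases mul_eq_zero.mp h1 with h | h
    · exact absurd h (pow_ne_zero _ hμ0)
    · exact h
  have h4 : (Matrix.charpoly Av).IsRoot μ⁻¹ := by
    rw [Polynomial.IsRoot, eval_charpoly']
    rw [show μ⁻¹ • (1 : Matrix (Fin m) (Fin m) ℂ) - Av = -(Av - μ⁻¹ • 1) by abel,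
      Matrix.det_neg, h3, mul_zero]
  have := hev μ⁻¹ h4
  rw [norm_inv, inv_eq_one] at this
  exact this

/-- Frobenius (Euclidean) norm of a complex `m × m` matrix. -/
noncomputable def cmatnorm {m : ℕ} (A : Matrix (Fin m) (Fin m) ℂ) : ℝ :=
  Real.sqrt (∑ i, ∑ j, ‖A i j‖ ^ 2)

theorem stmt3 {m : ℕ} (hm : 1 ≤ m) (A : GL (Fin m) ℂ)
    (hev : ∀ μ : ℂ, (Matrix.charpoly (A : Matrix (Fin m) (Fin m) ℂ)).IsRoot μ →
      ‖μ‖ = 1) :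
    ∃ C > (0 : ℝ), ∀ n : ℤ, n ≠ 0 →
      cmatnorm ((A ^ n : GL (Fin m) ℂ) : Matrix (Fin m) (Fin m) ℂ)
        ≤ C * |(n : ℝ)| ^ (m - 1) := by
  have hcm : ∀ M : Matrix (Fin m) (Fin m) ℂ, cmatnorm M = ‖M‖ := by
    intro M
    rw [cmatnorm, Matrix.frobenius_norm_def, Real.sqrt_eq_rpow]
    congr 1
    refine Finset.sum_congr rfl fun i _ => Finset.sum_congr rfl fun j _ => ?_
    rw [← Real.rpow_natCast ‖M i j‖ 2]
    norm_num
  obtain ⟨C₁, hC₁, h₁⟩ := pow_norm_le hm (A : Matrix (Fin m) (Fin m) ℂ) hev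
  obtain ⟨C₂, hC₂, h₂⟩ := pow_norm_le hm ((A⁻¹ : GL (Fin m) ℂ) : Matrix (Fin m) (Fin m) ℂ)
    (inv_charpoly_root A hev)
  refine ⟨C₁ + C₂, by linarith, fun n hn => ?_⟩
  have habs : |(n : ℝ)| = (n.natAbs : ℝ) := by
    rw [← Int.cast_abs, Int.abs_eq_natAbs, Int.cast_natCast]
  have hk1 : 1 ≤ n.natAbs := by omega
  have hpow0 : (0:ℝ) ≤ (n.natAbs : ℝ) ^ (m - 1) := by positivity
  rcases lt_or_gt_of_ne hn with hneg | hpos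
  · have hzp : (A ^ n : GL (Fin m) ℂ) = (A⁻¹) ^ (n.natAbs) := by
      have hn' : n = -(n.natAbs : ℤ) := by omega
      conv_lhs => rw [hn']
      rw [zpow_neg, zpow_natCast, inv_pow]
    have hb := h₂ n.natAbs hk1
    rw [hzp, Units.val_pow_eq_pow_val, hcm, habs]
    nlinarith
  · have hzp : (A ^ n : GL (Fin m) ℂ) = A ^ (n.natAbs) := by
      have hn' : n = (n.natAbs : ℤ) := by omega
      conv_lhs => rw [hn']
      rw [zpow_natCast]
    have hb := h₁ n.natAbs hk1
    rw [hzp, Units.val_pow_eq_pow_val, hcm, habs]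
    nlinarith
end

section
/- Let G be a subgroup of SL(2,ℝ) and ρ : G → GL_m(ℂ) a group homomorphism with polynomial growth, i.e. there exist constants C > 0 and α such that ‖ρ(γ)‖ ≤ C·‖γ‖^α for all γ ∈ G. Then for every parabolic element γ ∈ G, every eigenvalue of ρ(γ) has modulus 1. -/
open scoped MatrixGroups

/-- Euclidean norm of a matrix in `SL(2, ℝ)`. -/
noncomputable def slnorm (g : SL(2, ℝ)) : ℝ :=
  Real.sqrt (∑ i, ∑ j, ((g : Matrix (Fin 2) (Fin 2) ℝ) i j) ^ 2)

lemma cmatnorm_nonneg {m : ℕ} (A : Matrix (Fin m) (Fin m) ℂ) : 0 ≤ cmatnorm A :=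
  Real.sqrt_nonneg _

lemma entry_le_cmatnorm {m : ℕ} (A : Matrix (Fin m) (Fin m) ℂ) (i j : Fin m) :
    ‖A i j‖ ≤ cmatnorm A := by
  have h1 : ‖A i j‖ ^ 2 ≤ ∑ i', ∑ j', ‖A i' j'‖ ^ 2 := by
    calc ‖A i j‖ ^ 2 ≤ ∑ j', ‖A i j'‖ ^ 2 :=
          Finset.single_le_sum (f := fun j' => ‖A i j'‖ ^ 2)
            (fun _ _ => sq_nonneg _) (Finset.mem_univ j)
      _ ≤ ∑ i', ∑ j', ‖A i' j'‖ ^ 2 :=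
          Finset.single_le_sum (f := fun i' => ∑ j', ‖A i' j'‖ ^ 2)
            (fun _ _ => Finset.sum_nonneg fun _ _ => sq_nonneg _) (Finset.mem_univ i)
  have := Real.sqrt_le_sqrt h1
  rwa [Real.sqrt_sq (norm_nonneg _)] at this

lemma eig_le {m : ℕ} (A : Matrix (Fin m) (Fin m) ℂ) (μ : ℂ) (v : Fin m → ℂ) (hv : v ≠ 0)
    (h : A.mulVec v = μ • v) : ‖μ‖ ≤ m * cmatnorm A := by
  have hm : m ≠ 0 := by
    rintro rfl
    exact hv (funext fun i => i.elim0)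
  have : Nonempty (Fin m) := ⟨⟨0, Nat.pos_of_ne_zero hm⟩⟩
  have hne : (Finset.univ : Finset (Fin m)).Nonempty := Finset.univ_nonempty
  obtain ⟨i, -, hi⟩ := Finset.exists_max_image Finset.univ (fun j => ‖v j‖) hne
  have hvi : 0 < ‖v i‖ := by
    rcases (norm_nonneg (v i)).lt_or_eq with h' | h'
    · exact h'
    · exfalso; apply hv; funext j
      have := hi j (Finset.mem_univ j)
      rw [← h'] at this
      exact norm_eq_zero.mp (le_antisymm this (norm_nonneg _))
  have heq : μ * v i = ∑ j, A i j * v j := by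
    have := congrFun h i
    simp [Matrix.mulVec, dotProduct, Pi.smul_apply, smul_eq_mul] at this
    rw [this]
  have hb : ‖μ‖ * ‖v i‖ ≤ m * cmatnorm A * ‖v i‖ := by
    calc ‖μ‖ * ‖v i‖ = ‖μ * v i‖ := (norm_mul _ _).symm
      _ = ‖∑ j, A i j * v j‖ := by rw [heq]
      _ ≤ ∑ j, ‖A i j * v j‖ := norm_sum_le _ _
      _ ≤ ∑ j : Fin m, cmatnorm A * ‖v i‖ := by
          apply Finset.sum_le_sum
          intro j _
          rw [norm_mul]
          exact mul_le_mul (entry_le_cmatnorm A i j) (hi j (Finset.mem_univ j))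
            (norm_nonneg _) (cmatnorm_nonneg A)
      _ = m * cmatnorm A * ‖v i‖ := by
          rw [Finset.sum_const, Finset.card_univ, Fintype.card_fin, nsmul_eq_mul]; ring
  exact le_of_mul_le_mul_right hb hvi

lemma pow_eig {m : ℕ} (A : Matrix (Fin m) (Fin m) ℂ) (μ : ℂ) (v : Fin m → ℂ)
    (h : A.mulVec v = μ • v) (n : ℕ) : (A ^ n).mulVec v = μ ^ n • v := by
  induction n with
  | zero => simp [Matrix.one_mulVec]
  | succ k ih =>
      rw [pow_succ, ← Matrix.mulVec_mulVec, h, Matrix.mulVec_smul, ih, smul_smul, pow_succ]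
      ring_nf

lemma slnorm_ge_one (g : SL(2, ℝ)) : 1 ≤ slnorm g := by
  set M := (g : Matrix (Fin 2) (Fin 2) ℝ)
  have hdet : M 0 0 * M 1 1 - M 0 1 * M 1 0 = 1 := by
    have := g.property
    rwa [Matrix.det_fin_two] at this
  have h2 : (2 : ℝ) ≤ ∑ i, ∑ j, M i j ^ 2 := by
    simp only [Fin.sum_univ_two]
    nlinarith [sq_nonneg (M 0 0 - M 1 1), sq_nonneg (M 0 1 + M 1 0)]
  have : Real.sqrt 1 ≤ Real.sqrt (∑ i, ∑ j, M i j ^ 2) :=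
    Real.sqrt_le_sqrt (by linarith)
  simpa [slnorm] using this

lemma sl2_pow_bound (γ : SL(2, ℝ)) (htr : |Matrix.trace (γ : Matrix (Fin 2) (Fin 2) ℝ)| = 2) :
    ∃ K : ℝ, 1 ≤ K ∧ ∀ n : ℕ, 1 ≤ n → slnorm (γ ^ n) ≤ K * n := by
  set g := (γ : Matrix (Fin 2) (Fin 2) ℝ) with hg
  set t := Matrix.trace g with ht
  have hdet : g 0 0 * g 1 1 - g 0 1 * g 1 0 = 1 := by
    have := γ.property; rwa [Matrix.det_fin_two] at this
  have htr2 : g 0 0 + g 1 1 = t := by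
    rw [ht, Matrix.trace_fin_two]
  set s : ℝ := t / 2 with hs
  have hs2 : s * s = 1 := by
    rcases abs_eq (by norm_num : (0:ℝ) ≤ 2) |>.mp htr with h | h <;>
      · rw [hs, h]; norm_num
  have hts : t = 2 * s := by rw [hs]; ring
  -- Cayley-Hamilton for 2x2 with det 1
  have hCH : g * g = t • g - 1 := by
    ext i j
    fin_cases i <;> fin_cases j <;>
      simp only [Matrix.mul_apply, Fin.sum_univ_two, Matrix.smul_apply, Matrix.one_apply,
        Matrix.sub_apply, smul_eq_mul, Fin.isValue] <;>
      norm_num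
    · linear_combination g 0 0 * htr2 - hdet
    · linear_combination g 0 1 * htr2
    · linear_combination g 1 0 * htr2
    · linear_combination g 1 1 * htr2 - hdet
  set N : Matrix (Fin 2) (Fin 2) ℝ := s • g - 1 with hN
  have hN2 : N * N = 0 := by
    rw [hN]
    have : (s • g - 1) * (s • g - 1) = (s * s) • (g * g) - (2 * s) • g + 1 := by
      simp only [sub_mul, mul_sub, Matrix.smul_mul, Matrix.mul_smul, smul_smul, one_mul, mul_one]
      module
    rw [this, hs2, hCH, ← hts, one_smul]
    abel
  have hgN : g = s • ((1 : Matrix (Fin 2) (Fin 2) ℝ) + N) := by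
    rw [hN, smul_add, smul_sub, smul_smul, hs2, one_smul]
    abel
  have hpow : ∀ n : ℕ, g ^ n = s ^ n • ((1 : Matrix (Fin 2) (Fin 2) ℝ) + (n : ℝ) • N) := by
    intro n
    induction n with
    | zero => simp
    | succ k ih =>
        rw [pow_succ, ih, hgN, Matrix.smul_mul, Matrix.mul_smul, smul_smul, ← pow_succ]
        congr 1
        have : ((1 : Matrix (Fin 2) (Fin 2) ℝ) + (k : ℝ) • N) * (1 + N)
            = 1 + ((k : ℝ) + 1) • N + (k : ℝ) • (N * N) := by
          simp [add_mul, mul_add, Matrix.smul_mul, Matrix.mul_smul, add_smul]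
          abel
        rw [this, hN2, smul_zero, add_zero]
        push_cast
        ring_nf
  set K : ℝ := Real.sqrt (∑ i, ∑ j, (1 + |N i j|) ^ 2) with hK
  have hK1 : 1 ≤ K := by
    rw [hK]
    have h1 : (1 : ℝ) ≤ ∑ i, ∑ j, (1 + |N i j|) ^ 2 := by
      have : ∀ i j : Fin 2, (1 : ℝ) ≤ (1 + |N i j|) ^ 2 := by
        intro i j
        nlinarith [abs_nonneg (N i j)]
      calc (1 : ℝ) ≤ (1 + |N 0 0|) ^ 2 := this 0 0
        _ ≤ ∑ j : Fin 2, (1 + |N 0 j|) ^ 2 :=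
            Finset.single_le_sum (f := fun j => (1 + |N 0 j|) ^ 2)
              (fun _ _ => sq_nonneg _) (Finset.mem_univ 0)
        _ ≤ ∑ i : Fin 2, ∑ j : Fin 2, (1 + |N i j|) ^ 2 :=
            Finset.single_le_sum (f := fun i => ∑ j : Fin 2, (1 + |N i j|) ^ 2)
              (fun _ _ => Finset.sum_nonneg fun _ _ => sq_nonneg _) (Finset.mem_univ 0)
    calc (1 : ℝ) = Real.sqrt 1 := (Real.sqrt_one).symm
      _ ≤ _ := Real.sqrt_le_sqrt h1
  refine ⟨K, hK1, fun n hn => ?_⟩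
  have hcoe : ((γ ^ n : SL(2, ℝ)) : Matrix (Fin 2) (Fin 2) ℝ) = g ^ n := by
    simp [hg]
  have hentry : ∀ i j : Fin 2, ((γ ^ n : SL(2, ℝ)) : Matrix (Fin 2) (Fin 2) ℝ) i j ^ 2
      ≤ (n : ℝ) ^ 2 * (1 + |N i j|) ^ 2 := by
    intro i j
    rw [hcoe, hpow n]
    have hsn : |s ^ n| = 1 := by
      have : |s| = 1 := by
        have := hs2
        nlinarith [abs_nonneg s, sq_abs s, abs_mul_abs_self s]
      rw [abs_pow, this, one_pow]
    have habs : |(s ^ n • ((1 : Matrix (Fin 2) (Fin 2) ℝ) + (n : ℝ) • N)) i j|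
        ≤ (n : ℝ) * (1 + |N i j|) := by
      rw [Matrix.smul_apply, smul_eq_mul, abs_mul, hsn, one_mul]
      have h1n : (1 : ℝ) ≤ (n : ℝ) := by exact_mod_cast hn
      calc |((1 : Matrix (Fin 2) (Fin 2) ℝ) + (n : ℝ) • N) i j|
          ≤ |(1 : Matrix (Fin 2) (Fin 2) ℝ) i j| + |((n : ℝ) • N) i j| := by
            rw [Matrix.add_apply]; exact abs_add_le _ _
        _ ≤ 1 + (n : ℝ) * |N i j| := by
            have hone : |(1 : Matrix (Fin 2) (Fin 2) ℝ) i j| ≤ 1 := by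
              by_cases h : i = j <;> simp [Matrix.one_apply, h]
            have hsmul : |((n : ℝ) • N) i j| = (n : ℝ) * |N i j| := by
              rw [Matrix.smul_apply, smul_eq_mul, abs_mul, abs_of_nonneg (Nat.cast_nonneg n)]
            linarith
        _ ≤ (n : ℝ) * (1 + |N i j|) := by nlinarith [abs_nonneg (N i j)]
    calc (s ^ n • ((1 : Matrix (Fin 2) (Fin 2) ℝ) + (n : ℝ) • N)) i j ^ 2
        = |(s ^ n • ((1 : Matrix (Fin 2) (Fin 2) ℝ) + (n : ℝ) • N)) i j| ^ 2 := (sq_abs _).symm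
      _ ≤ ((n : ℝ) * (1 + |N i j|)) ^ 2 := by
          apply pow_le_pow_left₀ (abs_nonneg _) habs
      _ = (n : ℝ) ^ 2 * (1 + |N i j|) ^ 2 := by ring
  have hsum : (∑ i, ∑ j, ((γ ^ n : SL(2, ℝ)) : Matrix (Fin 2) (Fin 2) ℝ) i j ^ 2)
      ≤ (n : ℝ) ^ 2 * ∑ i, ∑ j, (1 + |N i j|) ^ 2 := by
    rw [Finset.mul_sum]
    apply Finset.sum_le_sum
    intro i _
    rw [Finset.mul_sum]
    exact Finset.sum_le_sum fun j _ => hentry i j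
  calc slnorm (γ ^ n) ≤ Real.sqrt ((n : ℝ) ^ 2 * ∑ i, ∑ j, (1 + |N i j|) ^ 2) :=
        Real.sqrt_le_sqrt hsum
    _ = (n : ℝ) * K := by
        rw [Real.sqrt_mul (sq_nonneg _), Real.sqrt_sq (Nat.cast_nonneg n), hK]
    _ = K * n := by ring

lemma exp_beats_poly (r D : ℝ) (hr : 1 < r) (k : ℕ)
    (h : ∀ n : ℕ, 1 ≤ n → r ^ n ≤ D * (n : ℝ) ^ k) : False := by
  have hD : 0 < D := by
    have := h 1 le_rfl
    simp at this
    linarith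
  have hinv : ‖r⁻¹‖ < 1 := by
    rw [Real.norm_eq_abs, abs_of_pos (inv_pos.mpr (by linarith))]
    rw [inv_lt_one_iff₀]
    right; exact hr
  have hsum := summable_pow_mul_geometric_of_norm_lt_one (R := ℝ) k hinv
  have htend := hsum.tendsto_atTop_zero
  have hev := htend.eventually_lt_const (show (0:ℝ) < D⁻¹ by positivity)
  obtain ⟨n, hn⟩ := (hev.and (Filter.eventually_ge_atTop 1)).exists
  have h1 := h n hn.2
  have hrn : 0 < r ^ n := pow_pos (by linarith) n
  have h2 := hn.1
  rw [inv_pow, ← div_eq_mul_inv, div_lt_iff₀ hrn] at h2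
  have h4 : D * ((n : ℝ) ^ k) < D * (D⁻¹ * r ^ n) := mul_lt_mul_of_pos_left h2 hD
  rw [← mul_assoc, mul_inv_cancel₀ (ne_of_gt hD), one_mul] at h4
  linarith

theorem stmt4 {m : ℕ} (G : Subgroup SL(2, ℝ)) (ρ : G →* GL (Fin m) ℂ)
    (C α : ℝ) (hC : 0 < C)
    (hpoly : ∀ γ : G, cmatnorm (ρ γ : Matrix (Fin m) (Fin m) ℂ)
      ≤ C * slnorm (γ : SL(2, ℝ)) ^ α) :
    ∀ γ : G,
      ((γ : SL(2, ℝ)) : Matrix (Fin 2) (Fin 2) ℝ) ≠ 1 →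
      ((γ : SL(2, ℝ)) : Matrix (Fin 2) (Fin 2) ℝ) ≠ -1 →
      |Matrix.trace ((γ : SL(2, ℝ)) : Matrix (Fin 2) (Fin 2) ℝ)| = 2 →
      ∀ μ : ℂ, (Matrix.charpoly (ρ γ : Matrix (Fin m) (Fin m) ℂ)).IsRoot μ →
        ‖μ‖ = 1 := by
  -- core bound: any eigenvalue of ρ δ for |tr δ| = 2 has modulus ≤ 1
  have key : ∀ δ : G, |Matrix.trace ((δ : SL(2, ℝ)) : Matrix (Fin 2) (Fin 2) ℝ)| = 2 →
      ∀ (μ : ℂ) (v : Fin m → ℂ), v ≠ 0 →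
        ((ρ δ : GL (Fin m) ℂ) : Matrix (Fin m) (Fin m) ℂ).mulVec v = μ • v →
        ‖μ‖ ≤ 1 := by
    intro δ htr μ v hv heig
    by_contra hgt
    push_neg at hgt
    obtain ⟨K, hK1, hKb⟩ := sl2_pow_bound (δ : SL(2, ℝ)) htr
    set β : ℝ := max α 0 with hβ
    set k : ℕ := ⌈β⌉₊ with hk
    set A : Matrix (Fin m) (Fin m) ℂ := ((ρ δ : GL (Fin m) ℂ) : Matrix (Fin m) (Fin m) ℂ)
    set D : ℝ := m * (C * K ^ β) with hD
    apply exp_beats_poly (‖μ‖) D hgt k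
    intro n hn
    have hn1 : (1 : ℝ) ≤ (n : ℝ) := by exact_mod_cast hn
    have hApow : ((ρ (δ ^ n) : GL (Fin m) ℂ) : Matrix (Fin m) (Fin m) ℂ) = A ^ n := by
      rw [map_pow, Units.val_pow_eq_pow_val]
    have e1 : ‖μ‖ ^ n ≤ m * cmatnorm (A ^ n) := by
      have := eig_le (A ^ n) (μ ^ n) v hv (pow_eig A μ v heig n)
      rwa [norm_pow] at this
    have e2 : cmatnorm (A ^ n) ≤ C * slnorm ((δ ^ n : G) : SL(2, ℝ)) ^ α := by
      rw [← hApow]; exact hpoly (δ ^ n)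
    have hcoe : ((δ ^ n : G) : SL(2, ℝ)) = (δ : SL(2, ℝ)) ^ n := rfl
    have hsl1 : 1 ≤ slnorm ((δ : SL(2, ℝ)) ^ n) := slnorm_ge_one _
    have e3 : slnorm ((δ : SL(2, ℝ)) ^ n) ^ α ≤ slnorm ((δ : SL(2, ℝ)) ^ n) ^ β :=
      Real.rpow_le_rpow_of_exponent_le hsl1 (le_max_left α 0)
    have e4 : slnorm ((δ : SL(2, ℝ)) ^ n) ^ β ≤ (K * n) ^ β :=
      Real.rpow_le_rpow (by linarith) (hKb n hn) (le_max_right α 0)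
    have e5 : (K * n) ^ β = K ^ β * (n : ℝ) ^ β := by
      rw [Real.mul_rpow (by linarith) (by linarith)]
    have e6 : (n : ℝ) ^ β ≤ (n : ℝ) ^ (k : ℝ) :=
      Real.rpow_le_rpow_of_exponent_le hn1 (Nat.le_ceil β)
    have e7 : (n : ℝ) ^ (k : ℝ) = (n : ℝ) ^ k := Real.rpow_natCast _ _
    have hKβ : 0 < K ^ β := Real.rpow_pos_of_pos (by linarith) β
    calc ‖μ‖ ^ n ≤ m * cmatnorm (A ^ n) := e1
      _ ≤ m * (C * slnorm ((δ ^ n : G) : SL(2, ℝ)) ^ α) := by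
          apply mul_le_mul_of_nonneg_left e2 (Nat.cast_nonneg m)
      _ ≤ m * (C * (K ^ β * (n : ℝ) ^ k)) := by
          apply mul_le_mul_of_nonneg_left _ (Nat.cast_nonneg m)
          apply mul_le_mul_of_nonneg_left _ (le_of_lt hC)
          rw [hcoe]
          calc slnorm ((δ : SL(2, ℝ)) ^ n) ^ α ≤ (K * n) ^ β := le_trans e3 e4
            _ = K ^ β * (n : ℝ) ^ β := e5
            _ ≤ K ^ β * (n : ℝ) ^ k := by
                rw [← e7]
                exact mul_le_mul_of_nonneg_left e6 (le_of_lt hKβ)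
      _ = D * (n : ℝ) ^ k := by rw [hD]; ring
  intro γ h1 h2 htr μ hroot
  -- from the root, get an eigenvector
  set A : Matrix (Fin m) (Fin m) ℂ := ((ρ γ : GL (Fin m) ℂ) : Matrix (Fin m) (Fin m) ℂ) with hA
  have hdet0 : (μ • (1 : Matrix (Fin m) (Fin m) ℂ) - A).det = 0 := by
    have heval : A.charpoly.eval μ = (μ • (1 : Matrix (Fin m) (Fin m) ℂ) - A).det := by
      rw [Matrix.charpoly, ← Polynomial.coe_evalRingHom, RingHom.map_det]
      congr 1
      ext i j
      by_cases h : i = j <;>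
        simp [Matrix.charmatrix_apply, Matrix.sub_apply, Matrix.smul_apply, Matrix.one_apply,
          Matrix.diagonal_apply, h, smul_eq_mul]
    rw [← heval]
    exact hroot
  obtain ⟨v, hv, hveq⟩ := Matrix.exists_mulVec_eq_zero_iff.mpr hdet0
  have heig : A.mulVec v = μ • v := by
    have := hveq
    rw [Matrix.sub_mulVec, sub_eq_zero] at this
    rw [← this, Matrix.smul_mulVec, Matrix.one_mulVec]
  -- upper bound
  have hle : ‖μ‖ ≤ 1 := key γ htr μ v hv heig
  -- μ ≠ 0
  have hBA : ((ρ γ⁻¹ : GL (Fin m) ℂ) : Matrix (Fin m) (Fin m) ℂ) * A = 1 := by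
    rw [map_inv]
    have : ((ρ γ)⁻¹ * ρ γ : GL (Fin m) ℂ) = 1 := inv_mul_cancel _
    calc ((ρ γ)⁻¹ : GL (Fin m) ℂ).val * A = (((ρ γ)⁻¹ * ρ γ : GL (Fin m) ℂ) : Matrix _ _ ℂ) := rfl
      _ = 1 := by rw [this]; rfl
  set B : Matrix (Fin m) (Fin m) ℂ := ((ρ γ⁻¹ : GL (Fin m) ℂ) : Matrix (Fin m) (Fin m) ℂ)
  have hBv : B.mulVec (A.mulVec v) = v := by
    rw [Matrix.mulVec_mulVec, hBA, Matrix.one_mulVec]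
  have hμ0 : μ ≠ 0 := by
    intro h0
    apply hv
    have hz : A.mulVec v = 0 := by rw [heig, h0, zero_smul]
    rw [← hBv, hz, Matrix.mulVec_zero]
  have heiginv : B.mulVec v = μ⁻¹ • v := by
    have h5 : B.mulVec (μ • v) = v := by rw [← heig]; exact hBv
    rw [Matrix.mulVec_smul] at h5
    have h6 : μ⁻¹ • (μ • B.mulVec v) = μ⁻¹ • v := by rw [h5]
    rwa [smul_smul, inv_mul_cancel₀ hμ0, one_smul] at h6
  have htrinv : |Matrix.trace (((γ⁻¹ : G) : SL(2, ℝ)) : Matrix (Fin 2) (Fin 2) ℝ)| = 2 := by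
    have hcoe : ((γ⁻¹ : G) : SL(2, ℝ)) = (γ : SL(2, ℝ))⁻¹ := rfl
    rw [hcoe, Matrix.SpecialLinearGroup.coe_inv, Matrix.trace_fin_two,
      Matrix.adjugate_fin_two]
    rw [Matrix.trace_fin_two] at htr
    simpa [add_comm] using htr
  have hge : ‖μ⁻¹‖ ≤ 1 := key γ⁻¹ htrinv μ⁻¹ v hv heiginv
  rw [norm_inv] at hge
  have habs0 : 0 < ‖μ‖ := norm_pos_iff.mpr hμ0
  have : 1 ≤ ‖μ‖ := by
    rw [inv_le_one_iff₀] at hge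
    rcases hge with h | h
    · linarith
    · exact h
  linarith
end

section
/- Let G be a discrete subgroup of SL(2,ℝ) (i.e. G carries the discrete topology as a topological subgroup of SL(2,ℝ)). Assume ∞ is a cusp of G, i.e. there exists h ≠ 0 with the matrix (1 h; 0 1) ∈ G. Let 𝔠 ∈ ℝ be a cusp of G, i.e. there exists a parabolic element γ = (a b; c d) ∈ G (γ ≠ ±I, |a+d| = 2) fixing 𝔠: c·𝔠² + (d−a)·𝔠 − b = 0. Suppose 𝔠 and ∞ are inequivalent cusps, i.e. there is no γ = (a b; c d) ∈ G with c·𝔠 + d = 0. Then there exists δ > 0 such that |c·𝔠 + d| ≥ δ for every γ = (a b; c d) ∈ G. -/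
open scoped MatrixGroups

private lemma parab_alg (a b c d 𝔠 : ℝ) (hdet : a*d - b*c = 1) (htr : |a + d| = 2)
    (hfix : c*𝔠^2 + (d - a)*𝔠 - b = 0)
    (h1 : ¬(a = 1 ∧ b = 0 ∧ c = 0 ∧ d = 1))
    (h2 : ¬(a = -1 ∧ b = 0 ∧ c = 0 ∧ d = -1)) :
    c*(a+d) ≠ 0 ∧ a*a + b*c = 1 + (c*(a+d))*𝔠 ∧ a*b + b*d = -((c*(a+d))*𝔠^2)
      ∧ c*a + d*c = c*(a+d) ∧ c*b + d*d = 1 - (c*(a+d))*𝔠 := by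
  have htr2 : (a+d)^2 = 4 := by
    have := sq_abs (a+d); rw [htr] at this; nlinarith
  have hkey : (2*c*𝔠 + (d - a))^2 = 0 := by
    linear_combination 4*c*hfix + htr2 - 4*hdet
  have hd_a : d = a - 2*c*𝔠 := by
    have := sq_eq_zero_iff.mp hkey; linarith
  have hc : c ≠ 0 := by
    intro hc0
    have hda : d = a := by rw [hd_a, hc0]; ring
    have hb0 : b = 0 := by rw [hc0, hda] at hfix; linarith
    have ha2 : (a-1)*(a+1) = 0 := by rw [hda] at htr2; nlinarith
    rcases mul_eq_zero.mp ha2 with h | h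
    · exact h1 ⟨by linarith, hb0, hc0, by rw [hda]; linarith⟩
    · exact h2 ⟨by linarith, hb0, hc0, by rw [hda]; linarith⟩
  have hb : b = -(c*𝔠^2) := by rw [hd_a] at hfix; linarith
  have he2 : (a - c*𝔠)^2 = 1 := by rw [hd_a] at htr2; nlinarith
  refine ⟨?_, ?_, ?_, ?_, ?_⟩
  · have had : a + d ≠ 0 := by intro h; rw [h] at htr2; norm_num at htr2
    exact mul_ne_zero hc had
  · subst hb hd_a; linear_combination he2
  · subst hb hd_a; ring
  · ring
  · subst hb hd_a; linear_combination he2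

private lemma bnds (s h v U D : ℝ) (hs : 0 ≤ |s|) (hU : |U| ≤ |h| * |v| / 2)
    (hv : |v| ≤ D) (hD : 0 ≤ D) :
    |s * U * v| ≤ (|s| * (h^2 + |h| + 1)) * D^2 ∧ |s * U^2| ≤ (|s| * (h^2 + |h| + 1)) * D^2
      ∧ |s * v^2| ≤ (|s| * (h^2 + |h| + 1)) * D^2 := by
  have hvn := abs_nonneg v
  have hUn := abs_nonneg U
  have hhn := abs_nonneg h
  have hv2 : |v|^2 ≤ D^2 := by nlinarith
  have hh2 : |h|^2 = h^2 := sq_abs h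
  refine ⟨?_, ?_, ?_⟩
  · rw [abs_mul, abs_mul]
    nlinarith [mul_le_mul_of_nonneg_left (mul_le_mul_of_nonneg_right hU hvn) hs,
      mul_le_mul_of_nonneg_left hv2 (mul_nonneg hs (mul_nonneg hhn (by norm_num : (0:ℝ) ≤ 1/2))),
      mul_nonneg (mul_nonneg hs (sq_nonneg h)) (sq_nonneg D),
      mul_nonneg hs (sq_nonneg D),
      mul_nonneg (mul_nonneg hs hhn) (sq_nonneg D)]
  · rw [abs_mul, abs_pow]
    have hsq : |U|^2 ≤ (|h| * |v| / 2)^2 := by nlinarith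
    have heq : |s| * (|h| * |v| / 2)^2 = |s| * h^2 * |v|^2 / 4 := by rw [← hh2]; ring
    nlinarith [mul_le_mul_of_nonneg_left hsq hs, heq,
      mul_le_mul_of_nonneg_left hv2 (mul_nonneg hs (sq_nonneg h)),
      mul_nonneg (mul_nonneg hs hhn) (sq_nonneg D),
      mul_nonneg hs (sq_nonneg D),
      mul_nonneg (mul_nonneg hs (sq_nonneg h)) (sq_nonneg D),
      mul_nonneg (mul_nonneg hs (sq_nonneg h)) (sq_nonneg v)]
  · rw [abs_mul, abs_pow]
    nlinarith [mul_le_mul_of_nonneg_left hv2 hs,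
      mul_nonneg (mul_nonneg hs hhn) (sq_nonneg D),
      mul_nonneg (mul_nonneg hs (sq_nonneg h)) (sq_nonneg D)]

private lemma conj_elt (G : Subgroup SL(2, ℝ)) (𝔠 s : ℝ) (q : SL(2, ℝ)) (hq : q ∈ G)
    (hqm : (q : Matrix (Fin 2) (Fin 2) ℝ) = !![1+s*𝔠, -(s*𝔠^2); s, 1-s*𝔠])
    (g : SL(2, ℝ)) (hg : g ∈ G) :
    ∃ β ∈ G, (β : Matrix (Fin 2) (Fin 2) ℝ) =
      !![1 + s*((g : Matrix (Fin 2) (Fin 2) ℝ) 0 0 * 𝔠 + (g : Matrix (Fin 2) (Fin 2) ℝ) 0 1)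
            *((g : Matrix (Fin 2) (Fin 2) ℝ) 1 0 * 𝔠 + (g : Matrix (Fin 2) (Fin 2) ℝ) 1 1),
        -(s*((g : Matrix (Fin 2) (Fin 2) ℝ) 0 0 * 𝔠 + (g : Matrix (Fin 2) (Fin 2) ℝ) 0 1)^2);
        s*((g : Matrix (Fin 2) (Fin 2) ℝ) 1 0 * 𝔠 + (g : Matrix (Fin 2) (Fin 2) ℝ) 1 1)^2,
        1 - s*((g : Matrix (Fin 2) (Fin 2) ℝ) 0 0 * 𝔠 + (g : Matrix (Fin 2) (Fin 2) ℝ) 0 1)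
            *((g : Matrix (Fin 2) (Fin 2) ℝ) 1 0 * 𝔠 + (g : Matrix (Fin 2) (Fin 2) ℝ) 1 1)] := by
  refine ⟨g * q * g⁻¹, mul_mem (mul_mem hg hq) (inv_mem hg), ?_⟩
  have hdet : (g : Matrix (Fin 2) (Fin 2) ℝ) 0 0 * (g : Matrix (Fin 2) (Fin 2) ℝ) 1 1
      - (g : Matrix (Fin 2) (Fin 2) ℝ) 0 1 * (g : Matrix (Fin 2) (Fin 2) ℝ) 1 0 = 1 := by
    rw [← Matrix.det_fin_two]; exact Matrix.SpecialLinearGroup.det_coe g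
  have hinv : ((g⁻¹ : SL(2, ℝ)) : Matrix (Fin 2) (Fin 2) ℝ) =
      !![(g : Matrix (Fin 2) (Fin 2) ℝ) 1 1, -(g : Matrix (Fin 2) (Fin 2) ℝ) 0 1;
         -(g : Matrix (Fin 2) (Fin 2) ℝ) 1 0, (g : Matrix (Fin 2) (Fin 2) ℝ) 0 0] := by
    rw [Matrix.SpecialLinearGroup.SL2_inv_expl]
    ext i j
    fin_cases i <;> fin_cases j <;> rfl
  rw [Matrix.SpecialLinearGroup.coe_mul, Matrix.SpecialLinearGroup.coe_mul, hinv, hqm]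
  ext i j
  fin_cases i <;> fin_cases j <;>
    simp [Matrix.mul_apply, Fin.sum_univ_two] <;>
    first | linear_combination hdet | linear_combination -hdet | ring

private lemma trans_zpow (G : Subgroup SL(2, ℝ)) (h : ℝ) (T : SL(2, ℝ)) (hT : T ∈ G)
    (hTm : (T : Matrix (Fin 2) (Fin 2) ℝ) = !![1, h; 0, 1]) (k : ℤ) :
    ∃ τ ∈ G, (τ : Matrix (Fin 2) (Fin 2) ℝ) = !![1, (k : ℝ)*h; 0, 1] := by
  have hTinv : ((T⁻¹ : SL(2, ℝ)) : Matrix (Fin 2) (Fin 2) ℝ) = !![1, -h; 0, 1] := by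
    rw [Matrix.SpecialLinearGroup.SL2_inv_expl]
    ext i j
    fin_cases i <;> fin_cases j <;> simp [hTm]
  induction k using Int.induction_on with
  | zero => exact ⟨1, one_mem G, by norm_num; exact Matrix.one_fin_two⟩
  | succ n ih =>
    obtain ⟨τ, hτ, hm⟩ := ih
    refine ⟨T * τ, mul_mem hT hτ, ?_⟩
    rw [Matrix.SpecialLinearGroup.coe_mul, hTm, hm, Matrix.mul_fin_two]
    push_cast
    ext i j
    fin_cases i <;> fin_cases j <;> (simp; try ring)
  | pred n ih =>
    obtain ⟨τ, hτ, hm⟩ := ih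
    refine ⟨T⁻¹ * τ, mul_mem (inv_mem hT) hτ, ?_⟩
    rw [Matrix.SpecialLinearGroup.coe_mul, hTinv, hm, Matrix.mul_fin_two]
    push_cast
    ext i j
    fin_cases i <;> fin_cases j <;> (simp; try ring)

set_option maxHeartbeats 1000000 in
theorem stmt6 (G : Subgroup SL(2, ℝ))
    (hdisc : DiscreteTopology
      ((fun g : SL(2, ℝ) => (g : Matrix (Fin 2) (Fin 2) ℝ)) '' (G : Set SL(2, ℝ))))
    (hinf : ∃ h : ℝ, h ≠ 0 ∧ ∃ γ ∈ G,
      (γ : Matrix (Fin 2) (Fin 2) ℝ) = !![1, h; 0, 1])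
    (𝔠 : ℝ)
    (hcusp : ∃ γ ∈ G,
      (γ : Matrix (Fin 2) (Fin 2) ℝ) ≠ 1 ∧
      (γ : Matrix (Fin 2) (Fin 2) ℝ) ≠ -1 ∧
      |Matrix.trace ((γ : Matrix (Fin 2) (Fin 2) ℝ))| = 2 ∧
      (γ : Matrix (Fin 2) (Fin 2) ℝ) 1 0 * 𝔠 ^ 2
        + ((γ : Matrix (Fin 2) (Fin 2) ℝ) 1 1 - (γ : Matrix (Fin 2) (Fin 2) ℝ) 0 0) * 𝔠
        - (γ : Matrix (Fin 2) (Fin 2) ℝ) 0 1 = 0)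
    (hineq : ∀ γ ∈ G,
      (γ : Matrix (Fin 2) (Fin 2) ℝ) 1 0 * 𝔠 + (γ : Matrix (Fin 2) (Fin 2) ℝ) 1 1 ≠ 0) :
    ∃ δ > (0 : ℝ), ∀ γ ∈ G,
      δ ≤ |(γ : Matrix (Fin 2) (Fin 2) ℝ) 1 0 * 𝔠 + (γ : Matrix (Fin 2) (Fin 2) ℝ) 1 1| := by
  by_contra hcon
  push_neg at hcon
  obtain ⟨h, hh0, T, hTG, hTm⟩ := hinf
  obtain ⟨γP, hγPG, hne1, hne2, htrP, hfixP⟩ := hcusp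
  have hdetA : (γP : Matrix (Fin 2) (Fin 2) ℝ) 0 0 * (γP : Matrix (Fin 2) (Fin 2) ℝ) 1 1
      - (γP : Matrix (Fin 2) (Fin 2) ℝ) 0 1 * (γP : Matrix (Fin 2) (Fin 2) ℝ) 1 0 = 1 := by
    rw [← Matrix.det_fin_two]; exact Matrix.SpecialLinearGroup.det_coe γP
  have htrA : |(γP : Matrix (Fin 2) (Fin 2) ℝ) 0 0 + (γP : Matrix (Fin 2) (Fin 2) ℝ) 1 1| = 2 := by
    rwa [Matrix.trace_fin_two] at htrP
  have hne1' : ¬((γP : Matrix (Fin 2) (Fin 2) ℝ) 0 0 = 1 ∧ (γP : Matrix (Fin 2) (Fin 2) ℝ) 0 1 = 0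
      ∧ (γP : Matrix (Fin 2) (Fin 2) ℝ) 1 0 = 0 ∧ (γP : Matrix (Fin 2) (Fin 2) ℝ) 1 1 = 1) := by
    rintro ⟨e1, e2, e3, e4⟩
    apply hne1
    rw [Matrix.eta_fin_two ((γP : Matrix (Fin 2) (Fin 2) ℝ)), e1, e2, e3, e4]
    exact Matrix.one_fin_two.symm
  have hne2' : ¬((γP : Matrix (Fin 2) (Fin 2) ℝ) 0 0 = -1 ∧ (γP : Matrix (Fin 2) (Fin 2) ℝ) 0 1 = 0
      ∧ (γP : Matrix (Fin 2) (Fin 2) ℝ) 1 0 = 0 ∧ (γP : Matrix (Fin 2) (Fin 2) ℝ) 1 1 = -1) := by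
    rintro ⟨e1, e2, e3, e4⟩
    refine hne2 ?_
    rw [Matrix.eta_fin_two (γP : Matrix (Fin 2) (Fin 2) ℝ), e1, e2, e3, e4]
    ext i j; fin_cases i <;> fin_cases j <;> simp [Matrix.one_apply]
  obtain ⟨hs0, hq1, hq2, hq3, hq4⟩ := parab_alg ((γP : Matrix (Fin 2) (Fin 2) ℝ) 0 0)
    ((γP : Matrix (Fin 2) (Fin 2) ℝ) 0 1) ((γP : Matrix (Fin 2) (Fin 2) ℝ) 1 0)
    ((γP : Matrix (Fin 2) (Fin 2) ℝ) 1 1) 𝔠 (by linear_combination hdetA) htrA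
    (by linear_combination hfixP) hne1' hne2'
  set s : ℝ := (γP : Matrix (Fin 2) (Fin 2) ℝ) 1 0
    * ((γP : Matrix (Fin 2) (Fin 2) ℝ) 0 0 + (γP : Matrix (Fin 2) (Fin 2) ℝ) 1 1) with hsdef
  have hqm : ((γP * γP : SL(2, ℝ)) : Matrix (Fin 2) (Fin 2) ℝ)
      = !![1+s*𝔠, -(s*𝔠^2); s, 1-s*𝔠] := by
    rw [Matrix.SpecialLinearGroup.coe_mul]
    ext i j
    fin_cases i <;> fin_cases j <;> simp [Matrix.mul_apply, Fin.sum_univ_two] <;>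
      first
        | linear_combination hq1
        | linear_combination hq2
        | linear_combination hq3
        | linear_combination hq4
  set S : Set (Matrix (Fin 2) (Fin 2) ℝ) :=
    (fun g : SL(2, ℝ) => (g : Matrix (Fin 2) (Fin 2) ℝ)) '' (G : Set SL(2, ℝ)) with hSdef
  have h1S : (1 : Matrix (Fin 2) (Fin 2) ℝ) ∈ S := ⟨1, G.one_mem, by simp⟩
  have hbot := (discreteTopology_subtype_iff.mp hdisc) 1 h1S
  have hbot' : nhdsWithin (1 : Matrix (Fin 2) (Fin 2) ℝ) (S \ {1}) = ⊥ := by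
    rw [← le_bot_iff] at hbot ⊢
    refine le_trans ?_ hbot
    rw [nhdsWithin, nhdsWithin]
    refine le_inf (le_inf inf_le_left ?_) ?_
    · exact le_trans inf_le_right (Filter.principal_mono.mpr (fun x hx => hx.2))
    · exact le_trans inf_le_right (Filter.principal_mono.mpr Set.diff_subset)
  set C : ℝ := |s| * (h^2 + |h| + 1) with hCdef
  have habs : 0 < |s| := abs_pos.mpr hs0
  have hC : 0 < C := by positivity
  have key : ∀ n : ℕ, ∃ M ∈ S, M ≠ 1 ∧
      ∀ i j, |M i j - (1 : Matrix (Fin 2) (Fin 2) ℝ) i j| ≤ C * (1/(n+1))^2 := by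
    intro n
    have hδ : (0 : ℝ) < 1/(n+1) := by positivity
    obtain ⟨γ, hγG, hγlt⟩ := hcon (1/(n+1)) hδ
    set u : ℝ := (γ : Matrix (Fin 2) (Fin 2) ℝ) 0 0 * 𝔠 + (γ : Matrix (Fin 2) (Fin 2) ℝ) 0 1
      with hu
    set v : ℝ := (γ : Matrix (Fin 2) (Fin 2) ℝ) 1 0 * 𝔠 + (γ : Matrix (Fin 2) (Fin 2) ℝ) 1 1
      with hv
    have hv0 : v ≠ 0 := hineq γ hγG
    have hvlt : |v| < 1/(n+1) := hγlt
    have hhv0 : h * v ≠ 0 := mul_ne_zero hh0 hv0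
    set k : ℤ := -round (u / (h * v)) with hk
    obtain ⟨τ, hτG, hτm⟩ := trans_zpow G h T hTG hTm k
    set g : SL(2, ℝ) := τ * γ with hg
    have hg10 : (g : Matrix (Fin 2) (Fin 2) ℝ) 1 0 = (γ : Matrix (Fin 2) (Fin 2) ℝ) 1 0 := by
      rw [hg, Matrix.SpecialLinearGroup.coe_mul, hτm]
      simp [Matrix.mul_apply, Fin.sum_univ_two]
    have hg11 : (g : Matrix (Fin 2) (Fin 2) ℝ) 1 1 = (γ : Matrix (Fin 2) (Fin 2) ℝ) 1 1 := by
      rw [hg, Matrix.SpecialLinearGroup.coe_mul, hτm]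
      simp [Matrix.mul_apply, Fin.sum_univ_two]
    have hg00 : (g : Matrix (Fin 2) (Fin 2) ℝ) 0 0
        = (γ : Matrix (Fin 2) (Fin 2) ℝ) 0 0 + (k : ℝ) * h * (γ : Matrix (Fin 2) (Fin 2) ℝ) 1 0 := by
      rw [hg, Matrix.SpecialLinearGroup.coe_mul, hτm]
      simp [Matrix.mul_apply, Fin.sum_univ_two]
    have hg01 : (g : Matrix (Fin 2) (Fin 2) ℝ) 0 1
        = (γ : Matrix (Fin 2) (Fin 2) ℝ) 0 1 + (k : ℝ) * h * (γ : Matrix (Fin 2) (Fin 2) ℝ) 1 1 := by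
      rw [hg, Matrix.SpecialLinearGroup.coe_mul, hτm]
      simp [Matrix.mul_apply, Fin.sum_univ_two]
    set U : ℝ := (g : Matrix (Fin 2) (Fin 2) ℝ) 0 0 * 𝔠 + (g : Matrix (Fin 2) (Fin 2) ℝ) 0 1
      with hU
    set V : ℝ := (g : Matrix (Fin 2) (Fin 2) ℝ) 1 0 * 𝔠 + (g : Matrix (Fin 2) (Fin 2) ℝ) 1 1
      with hV
    have hVv : V = v := by rw [hV, hg10, hg11, hv]
    have hUu : U = u + (k : ℝ) * (h * v) := by rw [hU, hg00, hg01, hu, hv]; ring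
    have hu_eq : u = (u / (h * v)) * (h * v) := (div_mul_cancel₀ u hhv0).symm
    have hUbd : |U| ≤ |h| * |v| / 2 := by
      have hU2 : U = (h * v) * (u / (h * v) - (round (u / (h * v)) : ℝ)) := by
        rw [hUu, hk]
        push_cast
        linear_combination hu_eq
      rw [hU2, abs_mul, abs_mul]
      have h1 := abs_sub_round (u / (h * v))
      have h2 : (0:ℝ) ≤ |h| * |v| := by positivity
      nlinarith
    obtain ⟨β, hβG, hβm⟩ := conj_elt G 𝔠 s (γP * γP) (mul_mem hγPG hγPG) hqm g
      (mul_mem hτG hγG)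
    rw [← hU, ← hV, hVv] at hβm
    obtain ⟨b1, b2, b3⟩ := bnds s h v U (1/(n+1)) (abs_nonneg s) hUbd (le_of_lt hvlt)
      (le_of_lt hδ)
    rw [← hCdef] at b1 b2 b3
    refine ⟨(β : Matrix (Fin 2) (Fin 2) ℝ), ⟨β, hβG, rfl⟩, ?_, ?_⟩
    · intro hβ1
      have h10 : (β : Matrix (Fin 2) (Fin 2) ℝ) 1 0 = s * v^2 := by rw [hβm]; simp
      have hne : s * v^2 ≠ 0 := mul_ne_zero hs0 (pow_ne_zero 2 hv0)
      exact hne (by rw [← h10, hβ1]; simp [Matrix.one_apply])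
    · intro i j
      fin_cases i <;> fin_cases j <;> rw [hβm] <;> simp [Matrix.one_apply] <;>
        first
          | simpa using b1
          | simpa using b2
          | simpa using b3
  choose f hfS hfne hfbd using key
  have htend : Filter.Tendsto f Filter.atTop (nhds 1) := by
    refine tendsto_pi_nhds.mpr ?_; intro i
    rw [tendsto_pi_nhds]; intro j
    apply tendsto_sub_nhds_zero_iff.mp
    apply squeeze_zero_norm (fun n => by simpa [Real.norm_eq_abs] using hfbd n i j)
    have := (tendsto_one_div_add_atTop_nhds_zero_nat.pow 2).const_mul C
    simpa using this
  have hmem : (1 : Matrix (Fin 2) (Fin 2) ℝ) ∈ closure (S \ {1}) :=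
    mem_closure_of_tendsto htend (Filter.Eventually.of_forall fun n => ⟨hfS n, hfne n⟩)
  exact (mem_closure_iff_nhdsWithin_neBot.mp hmem).ne hbot'
end

section
/- Let G be a discrete subgroup of SL(2,ℝ). Assume ∞ is a cusp of G, i.e. there exists h ≠ 0 with the matrix (1 h; 0 1) ∈ G. Let 𝔠 ∈ ℝ be a cusp of G, i.e. there exists a parabolic element γ = (a b; c d) ∈ G (γ ≠ ±I, |a+d| = 2) fixing 𝔠: c·𝔠² + (d−a)·𝔠 − b = 0. Suppose 𝔠 and ∞ are inequivalent cusps, i.e. there is no γ = (a b; c d) ∈ G with c·𝔠 + d = 0. Let K > 0 and v₀ > 0. Then there exists δ > 0 such that for every γ = (a b; c d) ∈ G and every z = u + iv ∈ ℂ with 0 < v < v₀ and |u − 𝔠| ≤ K·v, one has |c·z + d| ≥ δ. -/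
open scoped MatrixGroups
open Matrix Filter Topology


lemma entries_conj_T (x T : SL(2, ℝ)) (h : ℝ)
    (hT : (T : Matrix (Fin 2) (Fin 2) ℝ) = !![1, h; 0, 1]) :
    ((x * T * x⁻¹ : SL(2, ℝ)) : Matrix (Fin 2) (Fin 2) ℝ) =
      !![1 - h * ((x : Matrix (Fin 2) (Fin 2) ℝ) 0 0 * (x : Matrix (Fin 2) (Fin 2) ℝ) 1 0),
          h * (x : Matrix (Fin 2) (Fin 2) ℝ) 0 0 ^ 2;
         -(h * (x : Matrix (Fin 2) (Fin 2) ℝ) 1 0 ^ 2),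
          1 + h * ((x : Matrix (Fin 2) (Fin 2) ℝ) 0 0 * (x : Matrix (Fin 2) (Fin 2) ℝ) 1 0)] := by
  have hdet : (x : Matrix (Fin 2) (Fin 2) ℝ) 0 0 * (x : Matrix (Fin 2) (Fin 2) ℝ) 1 1
      - (x : Matrix (Fin 2) (Fin 2) ℝ) 0 1 * (x : Matrix (Fin 2) (Fin 2) ℝ) 1 0 = 1 := by
    have := x.property
    rwa [Matrix.det_fin_two] at this
  rw [Matrix.SpecialLinearGroup.coe_mul, Matrix.SpecialLinearGroup.coe_mul,
    Matrix.SpecialLinearGroup.coe_inv, Matrix.adjugate_fin_two, hT]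
  ext i j
  fin_cases i <;> fin_cases j <;>
    simp [Matrix.mul_apply, Fin.sum_univ_two] <;> ring_nf <;> nlinarith [hdet]

lemma claimA (G : Subgroup SL(2, ℝ))
    (hdisc : DiscreteTopology
      ((fun g : SL(2, ℝ) => (g : Matrix (Fin 2) (Fin 2) ℝ)) '' (G : Set SL(2, ℝ))))
    (h : ℝ) (hh : h ≠ 0) (T : SL(2, ℝ)) (hTG : T ∈ G)
    (hT : (T : Matrix (Fin 2) (Fin 2) ℝ) = !![1, h; 0, 1]) :
    ∀ γ ∈ G, (γ : Matrix (Fin 2) (Fin 2) ℝ) 1 0 ≠ 0 →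
      1 / (2 * |h|) ≤ |(γ : Matrix (Fin 2) (Fin 2) ℝ) 1 0| := by
  intro γ hγ hc
  by_contra hlt
  push_neg at hlt
  have hhpos : 0 < |h| := abs_pos.mpr hh
  set g : ℕ → SL(2, ℝ) := fun n => (fun x : SL(2, ℝ) => x * T * x⁻¹)^[n] γ with hg
  have hg0 : g 0 = γ := rfl
  have hgsucc : ∀ n, g (n + 1) = g n * T * (g n)⁻¹ := by
    intro n
    simp only [hg, Function.iterate_succ_apply']
  set A : ℕ → ℝ := fun n => ((g n : Matrix (Fin 2) (Fin 2) ℝ)) 0 0 with hA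
  set C : ℕ → ℝ := fun n => ((g n : Matrix (Fin 2) (Fin 2) ℝ)) 1 0 with hC
  have hmem : ∀ n, g n ∈ G := by
    intro n
    induction n with
    | zero => exact hγ
    | succ n ih => rw [hgsucc]; exact mul_mem (mul_mem ih hTG) (inv_mem ih)
  have hmat : ∀ n, ((g (n + 1) : SL(2, ℝ)) : Matrix (Fin 2) (Fin 2) ℝ) =
      !![1 - h * (A n * C n), h * A n ^ 2; -(h * C n ^ 2), 1 + h * (A n * C n)] := by
    intro n
    rw [hgsucc]
    exact entries_conj_T (g n) T h hT
  have hCsucc : ∀ n, C (n + 1) = -(h * C n ^ 2) := by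
    intro n
    show ((g (n + 1) : SL(2, ℝ)) : Matrix (Fin 2) (Fin 2) ℝ) 1 0 = _
    rw [hmat n]; simp
  have hAsucc : ∀ n, A (n + 1) = 1 - h * (A n * C n) := by
    intro n
    show ((g (n + 1) : SL(2, ℝ)) : Matrix (Fin 2) (Fin 2) ℝ) 0 0 = _
    rw [hmat n]; simp
  have hhc : |h| * |C 0| < 1 / 2 := by
    have : |C 0| < 1 / (2 * |h|) := hlt
    rw [lt_div_iff₀ (by positivity)] at this
    nlinarith
  have hCbound : ∀ n, |C n| ≤ |C 0| * (1 / 2) ^ n := by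
    intro n
    induction n with
    | zero => simp
    | succ n ih =>
      have h1 : |C n| ≤ |C 0| := by
        have : (1 / 2 : ℝ) ^ n ≤ 1 := pow_le_one₀ (by norm_num) (by norm_num)
        nlinarith [abs_nonneg (C 0)]
      have h2 : |C (n + 1)| = |h| * |C n| * |C n| := by
        rw [hCsucc n, abs_neg, abs_mul, abs_pow]
        ring
      calc |C (n+1)| = (|h| * |C n|) * |C n| := by rw [h2]
        _ ≤ (|h| * |C 0|) * (|C 0| * (1/2)^n) := by
            apply mul_le_mul _ ih (abs_nonneg _) (by positivity)
            exact mul_le_mul_of_nonneg_left h1 (abs_nonneg h)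
        _ ≤ (1/2) * (|C 0| * (1/2)^n) := by
            apply mul_le_mul_of_nonneg_right hhc.le (by positivity)
        _ = |C 0| * (1/2) ^ (n+1) := by ring
  have hCne : ∀ n, C n ≠ 0 := by
    intro n
    induction n with
    | zero => exact hc
    | succ n ih => rw [hCsucc n]; simp [hh, ih]
  -- bound on A
  set Am : ℝ := max |A 0| 2 with hAm
  have hAmtwo : (2:ℝ) ≤ Am := le_max_right _ _
  have hAbound : ∀ n, |A n| ≤ Am := by
    intro n
    induction n with
    | zero => exact le_max_left _ _
    | succ n ih =>
      have hCle : |C n| ≤ |C 0| := by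
        have : (1 / 2 : ℝ) ^ n ≤ 1 := pow_le_one₀ (by norm_num) (by norm_num)
        nlinarith [hCbound n, abs_nonneg (C 0)]
      have : |A (n+1)| ≤ 1 + |h| * |A n| * |C n| := by
        rw [hAsucc n]
        calc |1 - h * (A n * C n)| ≤ |(1:ℝ)| + |h * (A n * C n)| := abs_sub _ _
          _ = 1 + |h| * |A n| * |C n| := by rw [abs_one, abs_mul, abs_mul]; ring
      nlinarith [abs_nonneg (A n), abs_nonneg (C n), abs_nonneg h,
        mul_le_mul (mul_le_mul_of_nonneg_left ih (abs_nonneg h)) hCle (abs_nonneg _)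
          (by positivity)]
  -- limits
  have hhalf : Tendsto (fun n : ℕ => (1/2 : ℝ) ^ n) atTop (𝓝 0) := by
    apply tendsto_pow_atTop_nhds_zero_of_lt_one <;> norm_num
  have hC0 : Tendsto C atTop (𝓝 0) := by
    apply squeeze_zero_norm (fun n => ?_) (by have := hhalf.const_mul (|C 0|); rwa [mul_zero] at this)
    simpa [Real.norm_eq_abs] using hCbound n
  have hAC0 : Tendsto (fun n => A n * C n) atTop (𝓝 0) := by
    apply squeeze_zero_norm (fun n => ?_) (by have := hhalf.const_mul (Am * |C 0|); rwa [mul_zero] at this)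
    have := hCbound n
    have := hAbound n
    rw [Real.norm_eq_abs, abs_mul]
    calc |A n| * |C n| ≤ Am * (|C 0| * (1/2)^n) :=
          mul_le_mul (hAbound n) (hCbound n) (abs_nonneg _) (by positivity)
      _ = Am * |C 0| * (1/2)^n := by ring
  have hA1 : Tendsto A atTop (𝓝 1) := by
    rw [← tendsto_add_atTop_iff_nat 1]
    have : Tendsto (fun n => 1 - h * (A n * C n)) atTop (𝓝 1) := by
      have := (hAC0.const_mul h).const_sub 1
      simpa using this
    exact this.congr (fun n => (hAsucc n).symm)
  -- convergence of matrices
  set F : ℕ → Matrix (Fin 2) (Fin 2) ℝ := fun n => ((g (n+1) : SL(2,ℝ)) : Matrix (Fin 2) (Fin 2) ℝ)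
    with hF
  have hFt : Tendsto F atTop (𝓝 ((T : Matrix (Fin 2) (Fin 2) ℝ))) := by
    apply tendsto_pi_nhds.mpr
    intro i
    apply tendsto_pi_nhds.mpr
    intro j
    have hentry : ∀ n, F n i j =
        (!![1 - h * (A n * C n), h * A n ^ 2; -(h * C n ^ 2), 1 + h * (A n * C n)]
          : Matrix (Fin 2) (Fin 2) ℝ) i j := fun n => by rw [hF]; simp only; rw [hmat n]
    rw [hT]
    fin_cases i <;> fin_cases j <;>
      refine Tendsto.congr (fun n => (hentry n).symm) ?_ <;>
      simp only [Matrix.cons_val', Matrix.cons_val_zero, Matrix.cons_val_one, Matrix.head_cons,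
        Matrix.empty_val', Matrix.cons_val_fin_one, Matrix.head_fin_const, Matrix.of_apply]
    · simpa using (hAC0.const_mul h).const_sub 1
    · simpa using (hA1.pow 2).const_mul h
    · simpa using ((hC0.pow 2).const_mul h).neg
    · simpa using (hAC0.const_mul h).const_add 1
  -- discreteness
  set S : Set (Matrix (Fin 2) (Fin 2) ℝ) :=
    (fun g : SL(2, ℝ) => (g : Matrix (Fin 2) (Fin 2) ℝ)) '' (G : Set SL(2, ℝ)) with hS
  have hTS : (T : Matrix (Fin 2) (Fin 2) ℝ) ∈ S := ⟨T, hTG, rfl⟩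
  have hopen : IsOpen ({(⟨_, hTS⟩ : S)} : Set S) := isOpen_discrete _
  rw [isOpen_induced_iff] at hopen
  obtain ⟨U, hU, hUeq⟩ := hopen
  have hTU : (T : Matrix (Fin 2) (Fin 2) ℝ) ∈ U := by
    have : (⟨_, hTS⟩ : S) ∈ (Subtype.val ⁻¹' U : Set S) := by rw [hUeq]; rfl
    exact this
  have hev : ∀ᶠ n in atTop, F n ∈ U := hFt (hU.mem_nhds hTU)
  obtain ⟨n, hn⟩ := hev.exists
  have hFnS : F n ∈ S := ⟨g (n+1), hmem (n+1), rfl⟩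
  have : (⟨F n, hFnS⟩ : S) ∈ (Subtype.val ⁻¹' U : Set S) := hn
  rw [hUeq] at this
  have hFnT : F n = (T : Matrix (Fin 2) (Fin 2) ℝ) := by
    have := Subtype.ext_iff.mp this
    exact this
  have h10 : F n 1 0 = 0 := by rw [hFnT, hT]; simp
  rw [hF] at h10
  simp only at h10
  rw [hmat n] at h10
  simp at h10
  rcases h10 with h10 | h10
  · exact hh h10
  · exact hCne n h10


lemma entry_conj_P (x P : SL(2, ℝ)) (t c : ℝ)
    (hP : (P : Matrix (Fin 2) (Fin 2) ℝ) = !![1 + t * c, -(t * c ^ 2); t, 1 - t * c]) :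
    ((x * P * x⁻¹ : SL(2, ℝ)) : Matrix (Fin 2) (Fin 2) ℝ) 1 0 =
      t * ((x : Matrix (Fin 2) (Fin 2) ℝ) 1 0 * c + (x : Matrix (Fin 2) (Fin 2) ℝ) 1 1) ^ 2 := by
  have hdet : (x : Matrix (Fin 2) (Fin 2) ℝ) 0 0 * (x : Matrix (Fin 2) (Fin 2) ℝ) 1 1
      - (x : Matrix (Fin 2) (Fin 2) ℝ) 0 1 * (x : Matrix (Fin 2) (Fin 2) ℝ) 1 0 = 1 := by
    have := x.property
    rwa [Matrix.det_fin_two] at this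
  rw [Matrix.SpecialLinearGroup.coe_mul, Matrix.SpecialLinearGroup.coe_mul,
    Matrix.SpecialLinearGroup.coe_inv, Matrix.adjugate_fin_two, hP]
  simp [Matrix.mul_apply, Fin.sum_univ_two]
  ring



lemma parabolic_form (γ₀ : SL(2,ℝ)) (𝔠 : ℝ)
  (hne1 : (γ₀ : Matrix (Fin 2) (Fin 2) ℝ) ≠ 1)
  (hnem1 : (γ₀ : Matrix (Fin 2) (Fin 2) ℝ) ≠ -1)
  (htr : |Matrix.trace ((γ₀ : Matrix (Fin 2) (Fin 2) ℝ))| = 2)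
  (hfix : (γ₀ : Matrix (Fin 2) (Fin 2) ℝ) 1 0 * 𝔠 ^ 2
        + ((γ₀ : Matrix (Fin 2) (Fin 2) ℝ) 1 1 - (γ₀ : Matrix (Fin 2) (Fin 2) ℝ) 0 0) * 𝔠
        - (γ₀ : Matrix (Fin 2) (Fin 2) ℝ) 0 1 = 0) :
    ∃ t : ℝ, t ≠ 0 ∧ ((γ₀ * γ₀ : SL(2,ℝ)) : Matrix (Fin 2) (Fin 2) ℝ) =
    !![1 + t * 𝔠, -(t * 𝔠 ^ 2); t, 1 - t * 𝔠] := by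
  set a := (γ₀ : Matrix (Fin 2) (Fin 2) ℝ) 0 0 with ha
  set b := (γ₀ : Matrix (Fin 2) (Fin 2) ℝ) 0 1 with hb
  set c := (γ₀ : Matrix (Fin 2) (Fin 2) ℝ) 1 0 with hc
  set d := (γ₀ : Matrix (Fin 2) (Fin 2) ℝ) 1 1 with hd
  have hdet : a * d - b * c = 1 := by
    have := γ₀.property
    rwa [Matrix.det_fin_two] at this
  have hmatγ : (γ₀ : Matrix (Fin 2) (Fin 2) ℝ) = !![a, b; c, d] := by
    ext i j; fin_cases i <;> fin_cases j <;> rfl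
  have htr2 : a + d = 2 ∨ a + d = -2 := by
    rw [Matrix.trace_fin_two] at htr
    rcases (abs_eq (by norm_num)).mp htr with h' | h'
    · exact Or.inl h'
    · exact Or.inr h'
  have h4 : (a + d) ^ 2 = 4 := by rcases htr2 with h' | h' <;> rw [h'] <;> norm_num
  have hcne : c ≠ 0 := by
    intro hc0
    have had : a = d := by
      have hsq : (a - d) ^ 2 = 0 := by linear_combination h4 - 4*hdet - 4*b*hc0
      have := pow_eq_zero_iff (n := 2) (by norm_num) |>.mp hsq
      linarith
    have hb0 : b = 0 := by linear_combination -hfix + 𝔠^2*hc0 - 𝔠*had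
    have ha1 : a = 1 ∨ a = -1 := by
      have : (a - 1) * (a + 1) = 0 := by linear_combination hdet + a*had + c*hb0
      rcases mul_eq_zero.mp this with h' | h'
      · exact Or.inl (by linarith)
      · exact Or.inr (by linarith)
    rcases ha1 with h' | h'
    · apply hne1
      rw [hmatγ, hc0, hb0, ← had, h', Matrix.one_fin_two]
    · apply hnem1
      rw [hmatγ, hc0, hb0, ← had, h']
      ext i j; fin_cases i <;> fin_cases j <;> simp
  have hE : 2 * (c * 𝔠) + d - a = 0 := by
    have hsq : (2 * (c * 𝔠) + (d - a)) ^ 2 = 0 := by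
      linear_combination (4*c)*hfix + h4 - 4*hdet
    have := pow_eq_zero_iff (n := 2) (by norm_num) |>.mp hsq
    linarith
  have hbval : b = -(c * 𝔠 ^ 2) := by linear_combination -hfix + 𝔠 * hE
  have hdval : d = a - 2 * (c * 𝔠) := by linarith
  refine ⟨(a + d) * c, mul_ne_zero (by rcases htr2 with h' | h' <;> rw [h'] <;> norm_num) hcne, ?_⟩
  have hdet'' : a^2 - 2*a*(c*𝔠) + c^2*𝔠^2 - 1 = 0 := by
    linear_combination hdet - a*hdval + c*hbval
  rw [Matrix.SpecialLinearGroup.coe_mul, hmatγ]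
  ext i j
  fin_cases i <;> fin_cases j <;> simp [Matrix.mul_apply, Fin.sum_univ_two]
  · linear_combination hdet'' + c*hbval - (c*𝔠)*hdval
  · linear_combination (a+d)*hbval
  · linear_combination
  · linear_combination hdet'' + c*hbval + (a + d - c*𝔠)*hdval

theorem stmt7 (G : Subgroup SL(2, ℝ))
    (hdisc : DiscreteTopology
      ((fun g : SL(2, ℝ) => (g : Matrix (Fin 2) (Fin 2) ℝ)) '' (G : Set SL(2, ℝ))))
    (hinf : ∃ h : ℝ, h ≠ 0 ∧ ∃ γ ∈ G,
      (γ : Matrix (Fin 2) (Fin 2) ℝ) = !![1, h; 0, 1])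
    (𝔠 : ℝ)
    (hcusp : ∃ γ ∈ G,
      (γ : Matrix (Fin 2) (Fin 2) ℝ) ≠ 1 ∧
      (γ : Matrix (Fin 2) (Fin 2) ℝ) ≠ -1 ∧
      |Matrix.trace ((γ : Matrix (Fin 2) (Fin 2) ℝ))| = 2 ∧
      (γ : Matrix (Fin 2) (Fin 2) ℝ) 1 0 * 𝔠 ^ 2
        + ((γ : Matrix (Fin 2) (Fin 2) ℝ) 1 1 - (γ : Matrix (Fin 2) (Fin 2) ℝ) 0 0) * 𝔠
        - (γ : Matrix (Fin 2) (Fin 2) ℝ) 0 1 = 0)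
    (hineq : ∀ γ ∈ G,
      (γ : Matrix (Fin 2) (Fin 2) ℝ) 1 0 * 𝔠 + (γ : Matrix (Fin 2) (Fin 2) ℝ) 1 1 ≠ 0)
    (K v₀ : ℝ) (hK : 0 < K) (hv₀ : 0 < v₀) :
    ∃ δ > (0 : ℝ), ∀ γ ∈ G, ∀ z : ℂ,
      0 < z.im → z.im < v₀ → |z.re - 𝔠| ≤ K * z.im →
      δ ≤ ‖(((γ : Matrix (Fin 2) (Fin 2) ℝ) 1 0 : ℂ) * z
          + ((γ : Matrix (Fin 2) (Fin 2) ℝ) 1 1 : ℂ))‖ := by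
  obtain ⟨h, hh, T, hTG, hT⟩ := hinf
  obtain ⟨γ₀, hγ₀G, hne1, hnem1, htr, hfix⟩ := hcusp
  obtain ⟨t, ht, hPmat⟩ := parabolic_form γ₀ 𝔠 hne1 hnem1 htr hfix
  have hPG : γ₀ * γ₀ ∈ G := mul_mem hγ₀G hγ₀G
  have htpos : 0 < |t| := abs_pos.mpr ht
  have hhpos : 0 < |h| := abs_pos.mpr hh
  set ε : ℝ := Real.sqrt (1 / (2 * |h|) / |t|) with hε
  have hεpos : 0 < ε := Real.sqrt_pos.mpr (by positivity)
  -- lower bound on |c * 𝔠 + d| for all γ ∈ G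
  have key : ∀ γ ∈ G, ε ≤ |(γ : Matrix (Fin 2) (Fin 2) ℝ) 1 0 * 𝔠
      + (γ : Matrix (Fin 2) (Fin 2) ℝ) 1 1| := by
    intro γ hγ
    set s := (γ : Matrix (Fin 2) (Fin 2) ℝ) 1 0 * 𝔠 + (γ : Matrix (Fin 2) (Fin 2) ℝ) 1 1 with hs
    have hsne : s ≠ 0 := hineq γ hγ
    have hβG : γ * (γ₀ * γ₀) * γ⁻¹ ∈ G := mul_mem (mul_mem hγ hPG) (inv_mem hγ)
    have hβentry : ((γ * (γ₀ * γ₀) * γ⁻¹ : SL(2,ℝ)) : Matrix (Fin 2) (Fin 2) ℝ) 1 0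
        = t * s ^ 2 := entry_conj_P γ (γ₀ * γ₀) t 𝔠 hPmat
    have hne : ((γ * (γ₀ * γ₀) * γ⁻¹ : SL(2,ℝ)) : Matrix (Fin 2) (Fin 2) ℝ) 1 0 ≠ 0 := by
      rw [hβentry]
      exact mul_ne_zero ht (pow_ne_zero 2 hsne)
    have := claimA G hdisc h hh T hTG hT _ hβG hne
    rw [hβentry, abs_mul, abs_pow, sq_abs] at this
    have hsq : 1 / (2 * |h|) / |t| ≤ s ^ 2 := by
      rw [div_le_iff₀ htpos]
      linarith [this]
    calc ε ≤ Real.sqrt (s ^ 2) := Real.sqrt_le_sqrt hsq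
      _ = |s| := Real.sqrt_sq_eq_abs s
  refine ⟨ε / (2 * max K 1), by positivity, ?_⟩
  intro γ hγ z hv hvv₀ hu
  set c := (γ : Matrix (Fin 2) (Fin 2) ℝ) 1 0 with hc
  set d := (γ : Matrix (Fin 2) (Fin 2) ℝ) 1 1 with hd
  set s := c * 𝔠 + d with hs
  have hsε : ε ≤ |s| := key γ hγ
  set w : ℂ := (c : ℂ) * z + (d : ℂ) with hw
  have hwre : w.re = c * z.re + d := by
    simp [hw, Complex.add_re, Complex.mul_re]
  have hwim : w.im = c * z.im := by
    simp [hw, Complex.add_im, Complex.mul_im]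
  have hre_le : |w.re| ≤ ‖w‖ := Complex.abs_re_le_norm w
  have him_le : |w.im| ≤ ‖w‖ := Complex.abs_im_le_norm w
  have hmax1 : (1:ℝ) ≤ max K 1 := le_max_right _ _
  have hmaxK : K ≤ max K 1 := le_max_left _ _
  by_cases hcase : |c| * (K * z.im) ≤ |s| / 2
  · -- real part dominates
    have hxb : |c * (z.re - 𝔠)| ≤ |c| * (K * z.im) := by
      rw [abs_mul]
      exact mul_le_mul_of_nonneg_left hu (abs_nonneg c)
    have e : c * z.re + d = s + c * (z.re - 𝔠) := by rw [hs]; ring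
    have key2 : |s| ≤ |s + c * (z.re - 𝔠)| + |c * (z.re - 𝔠)| := by
      have := abs_add_le (s + c * (z.re - 𝔠)) (-(c * (z.re - 𝔠)))
      simpa using this
    have h1 : |s| / 2 ≤ |w.re| := by
      rw [hwre, e]
      linarith
    have h2 : ε / (2 * max K 1) ≤ ε / 2 := by
      apply div_le_div_of_nonneg_left hεpos.le (by norm_num)
      linarith
    linarith
  · -- imaginary part dominates
    push_neg at hcase
    have h1 : |s| / (2 * K) < |c| * z.im := by
      rw [div_lt_iff₀ (by positivity)]
      nlinarith
    have h2 : ε / (2 * max K 1) ≤ ε / (2 * K) := by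
      apply div_le_div_of_nonneg_left hεpos.le (by positivity)
      linarith
    have h3 : ε / (2 * K) ≤ |s| / (2 * K) := by
      gcongr
    have h4 : |w.im| = |c| * z.im := by
      rw [hwim, abs_mul, abs_of_pos hv]
    linarith
end

section
/- Let c, d, 𝔠 ∈ ℝ and K > 0. Let z = u + iv ∈ ℂ with v > 0 and |u − 𝔠| ≤ K·v. Then |c·z + d| ≥ |c·𝔠 + d| / √(K² + 1). -/
theorem stmt8 (c d 𝔠 K u v : ℝ) (hK : 0 < K) (hv : 0 < v)
    (hu : |u - 𝔠| ≤ K * v) :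
    |c * 𝔠 + d| / Real.sqrt (K ^ 2 + 1)
      ≤ ‖(c : ℂ) * (u + v * Complex.I) + d‖ := by
  have habs : ‖(c : ℂ) * (u + v * Complex.I) + d‖
      = Real.sqrt ((c * u + d) ^ 2 + (c * v) ^ 2) := by
    rw [Complex.norm_def, Complex.normSq_apply]
    congr 1
    simp [Complex.add_re, Complex.add_im, Complex.mul_re, Complex.mul_im]
    ring
  rw [habs]
  have hs : (0:ℝ) < Real.sqrt (K ^ 2 + 1) := Real.sqrt_pos.mpr (by positivity)
  rw [div_le_iff₀ hs]
  have key : |c * 𝔠 + d| ≤ |c * u + d| + K * (|c| * v) := by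
    have : |c * 𝔠 + d| ≤ |c * u + d| + |c * (𝔠 - u)| := by
      have : c * 𝔠 + d = (c * u + d) + c * (𝔠 - u) := by ring
      rw [this]; exact abs_add_le _ _
    refine this.trans ?_
    gcongr
    rw [abs_mul]
    calc |c| * |𝔠 - u| ≤ |c| * (K * v) := by
          gcongr; rw [abs_sub_comm]; exact hu
      _ = K * (|c| * v) := by ring
  have h1 : (|c * u + d| + K * (|c| * v)) ^ 2
      ≤ (K ^ 2 + 1) * ((c * u + d) ^ 2 + (c * v) ^ 2) := by
    have h2 : |c * u + d| ^ 2 = (c * u + d) ^ 2 := sq_abs _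
    have h3 : (|c| * v) ^ 2 = (c * v) ^ 2 := by
      rw [mul_pow, mul_pow, sq_abs]
    nlinarith [sq_nonneg (K * |c * u + d| - |c| * v), abs_nonneg (c * u + d),
      abs_nonneg c, hv.le]
  have h4 : Real.sqrt ((c * u + d) ^ 2 + (c * v) ^ 2) * Real.sqrt (K ^ 2 + 1)
      = Real.sqrt ((K ^ 2 + 1) * ((c * u + d) ^ 2 + (c * v) ^ 2)) := by
    rw [← Real.sqrt_mul (by positivity), mul_comm]
  rw [h4]
  calc |c * 𝔠 + d| ≤ |c * u + d| + K * (|c| * v) := key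
    _ = Real.sqrt ((|c * u + d| + K * (|c| * v)) ^ 2) :=
        (Real.sqrt_sq (by positivity)).symm
    _ ≤ Real.sqrt ((K ^ 2 + 1) * ((c * u + d) ^ 2 + (c * v) ^ 2)) :=
        Real.sqrt_le_sqrt h1
end

section
/- Let h > 0, Λ ∈ ℝ, Y > 0, and let f be a holomorphic function on the half-plane {τ ∈ ℂ : Im τ > Y} satisfying f(τ + h) = exp(2πiΛ)·f(τ) for all τ with Im τ > Y. Suppose f has moderate growth at ∞, i.e. there exist ν ∈ ℝ and Y′ > Y such that |f(τ)| < exp(ν·Im τ) whenever Im τ > Y′. Then there exist an integer M and complex numbers f_[n] for n ≥ −M such that for every τ with Im τ > Y, exp(−2πiΛτ/h)·f(τ) = Σ_{n=−M}^{∞} f_[n]·exp(2πinτ/h), and this series converges absolutely for Im τ > Y. -/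
open Complex Filter Asymptotics Function Metric
open scoped Real Topology

theorem stmt9 (h : ℝ) (hh : 0 < h) (Λ Y : ℝ) (hY : 0 < Y) (f : ℂ → ℂ)
    (hf : DifferentiableOn ℂ f {τ : ℂ | Y < τ.im})
    (hper : ∀ τ : ℂ, Y < τ.im →
      f (τ + h) = Complex.exp (2 * Real.pi * Complex.I * Λ) * f τ)
    (hgrow : ∃ ν : ℝ, ∃ Y' : ℝ, Y < Y' ∧
      ∀ τ : ℂ, Y' < τ.im → ‖f τ‖ < Real.exp (ν * τ.im)) :
    ∃ M : ℤ, ∃ a : ℕ → ℂ, ∀ τ : ℂ, Y < τ.im →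
      Summable (fun n : ℕ =>
        ‖a n * Complex.exp (2 * Real.pi * Complex.I * ((n : ℂ) - M) * τ / h)‖) ∧
      Complex.exp (-(2 * Real.pi * Complex.I * Λ * τ / h)) * f τ
        = ∑' n : ℕ, a n * Complex.exp (2 * Real.pi * Complex.I * ((n : ℂ) - M) * τ / h) := by
  obtain ⟨ν, Y', hYY', hgr⟩ := hgrow
  have hπ : (0:ℝ) < Real.pi := Real.pi_pos
  -- choose N large enough
  set N : ℕ := ⌈Λ + ν * h / (2 * Real.pi)⌉₊ with hNdef
  have hN : Λ + ν * h / (2 * Real.pi) ≤ (N : ℝ) := Nat.le_ceil _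
  -- periodic extension G
  set U : Set ℂ := {τ : ℂ | Y < τ.im} with hUdef
  have hUopen : IsOpen U := isOpen_lt continuous_const Complex.continuous_im
  set G : ℂ → ℂ := fun τ => if Y < τ.im then
      (Periodic.qParam h τ) ^ N * (Complex.exp (-(2 * Real.pi * Complex.I * Λ * τ / h)) * f τ)
    else 0 with hGdef
  have hG_body : ∀ τ : ℂ, Y < τ.im → G τ =
      (Periodic.qParam h τ) ^ N * (Complex.exp (-(2 * Real.pi * Complex.I * Λ * τ / h)) * f τ) :=
    fun τ hτ => if_pos hτ
  have him_add : ∀ τ : ℂ, (τ + (h:ℂ)).im = τ.im := by intro τ; simp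
  -- periodicity of G
  have hGper : Function.Periodic G h := by
    intro τ
    by_cases hτ : Y < τ.im
    · rw [hG_body τ hτ, hG_body (τ + h) (by rwa [him_add])]
      have hhC : (h:ℂ) ≠ 0 := Complex.ofReal_ne_zero.mpr hh.ne'
      have hq : Periodic.qParam h (τ + h) = Periodic.qParam h τ := by
        unfold Periodic.qParam
        rw [show 2 * (Real.pi:ℂ) * Complex.I * (τ + h) / h
            = 2 * (Real.pi:ℂ) * Complex.I * τ / h + 2 * Real.pi * Complex.I by
          field_simp]
        rw [Complex.exp_add, Complex.exp_two_pi_mul_I, mul_one]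
      have hE : Complex.exp (-(2 * Real.pi * Complex.I * Λ * (τ + h) / h))
          = Complex.exp (-(2 * Real.pi * Complex.I * Λ * τ / h))
            * Complex.exp (-(2 * Real.pi * Complex.I * Λ)) := by
        rw [← Complex.exp_add]
        congr 1
        field_simp
        ring
      rw [hq, hE, hper τ hτ]
      have hone : Complex.exp (-(2 * Real.pi * Complex.I * Λ))
          * Complex.exp (2 * Real.pi * Complex.I * Λ) = 1 := by
        rw [← Complex.exp_add]; simp
      calc Periodic.qParam h τ ^ N
            * (Complex.exp (-(2 * Real.pi * Complex.I * Λ * τ / h))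
              * Complex.exp (-(2 * Real.pi * Complex.I * Λ))
                * (Complex.exp (2 * Real.pi * Complex.I * Λ) * f τ))
          = Periodic.qParam h τ ^ N
            * (Complex.exp (-(2 * Real.pi * Complex.I * Λ * τ / h))
              * ((Complex.exp (-(2 * Real.pi * Complex.I * Λ))
                * Complex.exp (2 * Real.pi * Complex.I * Λ)) * f τ)) := by ring
        _ = _ := by rw [hone]; ring
    · have hτ' : ¬ Y < (τ + (h:ℂ)).im := by rwa [him_add]
      simp only [hGdef, if_neg hτ, if_neg hτ']
  -- differentiability of G on U
  have hGdiff : ∀ z : ℂ, Y < z.im → DifferentiableAt ℂ G z := by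
    intro z hz
    have hbody : DifferentiableOn ℂ (fun τ => (Periodic.qParam h τ) ^ N
        * (Complex.exp (-(2 * Real.pi * Complex.I * Λ * τ / h)) * f τ)) U := by
      apply DifferentiableOn.mul
      · apply DifferentiableOn.pow
        apply Differentiable.differentiableOn
        intro w
        unfold Periodic.qParam
        fun_prop
      · refine DifferentiableOn.mul ?_ hf
        apply Differentiable.differentiableOn
        fun_prop
    have hat : DifferentiableAt ℂ (fun τ => (Periodic.qParam h τ) ^ N
        * (Complex.exp (-(2 * Real.pi * Complex.I * Λ * τ / h)) * f τ)) z :=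
      hbody.differentiableAt (hUopen.mem_nhds hz)
    apply hat.congr_of_eventuallyEq
    exact eventually_of_mem (hUopen.mem_nhds hz) (fun w hw => hG_body w hw)
  -- abs of exponentials
  have habs : ∀ (c : ℝ) (τ : ℂ),
      ‖Complex.exp (2 * Real.pi * Complex.I * (c:ℂ) * τ / h)‖
        = Real.exp (-(2 * Real.pi * c * τ.im) / h) := by
    intro c τ
    rw [Complex.norm_exp]
    congr 1
    rw [show 2 * (Real.pi:ℂ) * Complex.I * (c:ℂ) * τ / (h:ℂ)
        = ((2 * Real.pi * c / h : ℝ) : ℂ) * (Complex.I * τ) by push_cast; ring]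
    rw [Complex.re_ofReal_mul]
    simp [Complex.mul_re]
    ring
  -- boundedness of G near I∞
  have hGbd : ∀ τ : ℂ, Y' < τ.im → ‖G τ‖ ≤ 1 := by
    intro τ hτ
    have hτY : Y < τ.im := hYY'.trans hτ
    have ht : 0 < τ.im := lt_trans (hY.trans hYY') hτ
    rw [hG_body τ hτY, norm_mul, norm_mul, norm_pow]
    have h1 : ‖Periodic.qParam h τ‖ = Real.exp (-2 * Real.pi * τ.im / h) :=
      Periodic.norm_qParam h τ
    have h2 : ‖Complex.exp (-(2 * Real.pi * Complex.I * Λ * τ / h))‖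
        = Real.exp (-(2 * Real.pi * (-Λ) * τ.im) / h) := by
      rw [show Complex.exp (-(2 * Real.pi * Complex.I * Λ * τ / h))
          = Complex.exp (2 * Real.pi * Complex.I * ((-Λ : ℝ) : ℂ) * τ / h) by
        congr 1; push_cast; ring]
      exact habs (-Λ) τ
    rw [h1, h2, ← Real.exp_nat_mul]
    have hfb : ‖f τ‖ ≤ Real.exp (ν * τ.im) := (hgr τ hτ).le
    have hκ : ν + 2 * Real.pi * (Λ - N) / h ≤ 0 := by
      have h2π : (0:ℝ) < 2 * Real.pi := by positivity
      have h1' : Λ - (N:ℝ) ≤ -(ν * h / (2 * Real.pi)) := by linarith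
      have h2' : 2 * Real.pi * (Λ - N) ≤ 2 * Real.pi * (-(ν * h / (2 * Real.pi))) :=
        mul_le_mul_of_nonneg_left h1' h2π.le
      have h3' : 2 * Real.pi * (-(ν * h / (2 * Real.pi))) = -(ν * h) := by
        field_simp
      rw [h3'] at h2'
      have h4' : 2 * Real.pi * (Λ - N) / h ≤ -(ν * h) / h := by
        gcongr
      have h5' : -(ν * h) / h = -ν := by field_simp
      rw [h5'] at h4'
      linarith
    have hfin : Real.exp ((N:ℝ) * (-2 * Real.pi * τ.im / h))
        * (Real.exp (-(2 * Real.pi * (-Λ) * τ.im) / h) * Real.exp (ν * τ.im)) ≤ 1 := by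
      rw [← Real.exp_add, ← Real.exp_add, Real.exp_le_one_iff,
        show (N:ℝ) * (-2 * Real.pi * τ.im / h) + (-(2 * Real.pi * (-Λ) * τ.im) / h + ν * τ.im)
          = τ.im * (ν + 2 * Real.pi * (Λ - N) / h) from by ring]
      calc τ.im * (ν + 2 * Real.pi * (Λ - N) / h) ≤ τ.im * 0 :=
            mul_le_mul_of_nonneg_left hκ ht.le
        _ = 0 := mul_zero _
    refine le_trans ?_ hfin
    have hp1 : (0:ℝ) ≤ Real.exp ((N:ℝ) * (-2 * Real.pi * τ.im / h)) := (Real.exp_pos _).le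
    have hp2 : (0:ℝ) ≤ Real.exp (-(2 * Real.pi * (-Λ) * τ.im) / h) := (Real.exp_pos _).le
    apply mul_le_mul_of_nonneg_left _ hp1
    apply mul_le_mul_of_nonneg_left hfb hp2
  have h_bd : BoundedAtFilter (Filter.comap Complex.im Filter.atTop) G := by
    apply Asymptotics.IsBigO.of_bound 1
    filter_upwards [preimage_mem_comap (Ioi_mem_atTop Y')] with τ hτ
    simpa using hGbd τ hτ
  have h_hol : ∀ᶠ z in (Filter.comap Complex.im Filter.atTop), DifferentiableAt ℂ G z := by
    filter_upwards [preimage_mem_comap (Ioi_mem_atTop Y)] with z hz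
    exact hGdiff z hz
  -- the cusp function F
  set F : ℂ → ℂ := Periodic.cuspFunction h G with hFdef
  set r : ℝ := Real.exp (-2 * Real.pi * Y / h) with hrdef
  have hr0 : 0 < r := Real.exp_pos _
  have hFdiff : ∀ q : ℂ, ‖q‖ < r → DifferentiableAt ℂ F q := by
    intro q hq
    rcases eq_or_ne q 0 with rfl | hq'
    · exact hGper.differentiableAt_cuspFunction_zero hh h_hol h_bd
    · have him : Y < (Periodic.invQParam h q).im := by
        rw [← Periodic.norm_qParam_lt_iff hh Y, Periodic.qParam_right_inv hh.ne' hq']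
        exact hq
      rw [← Periodic.qParam_right_inv hh.ne' hq']
      exact hGper.differentiableAt_cuspFunction hh.ne' (hGdiff _ him)
  have hdOn : ∀ s : NNReal, (s:ℝ) < r → DifferentiableOn ℂ F (Metric.closedBall 0 s) := by
    intro s hs z hz
    refine (hFdiff z ?_).differentiableWithinAt
    rw [Metric.mem_closedBall, dist_zero_right] at hz
    calc ‖z‖ = ‖z‖ := rfl
      _ ≤ s := hz
      _ < r := hs
  set R0 : NNReal := (r/2).toNNReal with hR0def
  have hR0c : (R0 : ℝ) = r / 2 := Real.coe_toNNReal _ (by positivity)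
  have hR0pos : 0 < R0 := by
    rw [← NNReal.coe_pos, hR0c]; positivity
  have hR0r : (R0 : ℝ) < r := by rw [hR0c]; linarith
  set p : FormalMultilinearSeries ℂ ℂ ℂ := cauchyPowerSeries F 0 R0 with hpdef
  have hp : HasFPowerSeriesOnBall F p 0 R0 := (hdOn R0 hR0r).hasFPowerSeriesOnBall hR0pos
  refine ⟨(N : ℤ), p.coeff, fun τ hτ => ?_⟩
  -- setup for this τ
  set q : ℂ := Periodic.qParam h τ with hqdef
  have hq0 : q ≠ 0 := Complex.exp_ne_zero _
  have hqr : ‖q‖ < r := (Periodic.norm_qParam_lt_iff hh Y τ).mpr hτ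
  set s : NNReal := ((‖q‖ + r)/2).toNNReal with hsdef
  have hsc : (s : ℝ) = (‖q‖ + r)/2 := Real.coe_toNNReal _ (by positivity)
  have hqs : ‖q‖ < s := by rw [hsc]; linarith
  have hsr : (s : ℝ) < r := by rw [hsc]; linarith
  have hs0 : 0 < s := by
    rw [← NNReal.coe_pos, hsc]
    have := norm_nonneg q
    linarith
  have hS : HasFPowerSeriesOnBall F (cauchyPowerSeries F 0 s) 0 s :=
    (hdOn s hsr).hasFPowerSeriesOnBall hs0
  have heqp : cauchyPowerSeries F 0 s = p :=
    hS.hasFPowerSeriesAt.eq_formalMultilinearSeries hp.hasFPowerSeriesAt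
  rw [heqp] at hS
  have hmem : q ∈ Metric.eball (0:ℂ) s := by
    rw [mem_eball_zero_iff]
    have : (‖q‖₊ : ℝ) < (s : ℝ) := by
      rw [coe_nnnorm]; exact hqs
    exact_mod_cast this
  have hsum : HasSum (fun n => p n fun _ => q) (F q) := by
    simpa using hS.hasSum hmem
  have hrad : (‖q‖₊ : ENNReal) < p.radius :=
    lt_of_lt_of_le (mem_emetric_ball_zero_iff.mp hmem) hS.r_le
  have hnorm : Summable fun n => ‖p n fun _ => q‖ :=
    p.summable_norm_apply (mem_emetric_ball_zero_iff.mpr hrad)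
  -- exponential splitting
  have hexp : ∀ n : ℕ, Complex.exp (2 * Real.pi * Complex.I * ((n : ℂ) - ((N:ℤ):ℂ)) * τ / h)
      = q ^ n * Complex.exp (2 * Real.pi * Complex.I * (-(N:ℂ)) * τ / h) := by
    intro n
    have hqn : q ^ n = Complex.exp ((n:ℂ) * (2 * Real.pi * Complex.I * τ / h)) := by
      rw [Complex.exp_nat_mul]
      rfl
    rw [hqn, ← Complex.exp_add]
    congr 1
    push_cast
    ring
  set E : ℂ := Complex.exp (2 * Real.pi * Complex.I * (-(N:ℂ)) * τ / h) with hEdef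
  have happly : ∀ n : ℕ, (p n fun _ => q) = p.coeff n * q ^ n := by
    intro n
    rw [p.apply_eq_pow_smul_coeff, smul_eq_mul]
    ring
  constructor
  · -- summability
    have hs' : Summable fun n => ‖p n fun _ => q‖ * ‖E‖ := hnorm.mul_right _
    apply hs'.congr
    intro n
    rw [hexp n, happly n]
    simp only [norm_mul, norm_pow]
    ring
  · -- the identity
    have hts : ∑' n : ℕ, p.coeff n
        * Complex.exp (2 * Real.pi * Complex.I * ((n : ℂ) - ((N:ℤ):ℂ)) * τ / h)
        = (∑' n : ℕ, (p n fun _ => q)) * E := by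
      rw [← tsum_mul_right]
      congr 1
      funext n
      rw [hexp n, happly n]
      ring
    rw [hts, hsum.tsum_eq]
    have hFq : F q = G τ := Periodic.eq_cuspFunction hh.ne' hGper τ
    rw [hFq, hG_body τ hτ]
    have hqNE : q ^ N * E = 1 := by
      have hqN : q ^ N = Complex.exp ((N:ℂ) * (2 * Real.pi * Complex.I * τ / h)) := by
        rw [Complex.exp_nat_mul]; rfl
      rw [hqN, hEdef, ← Complex.exp_add,
        show (N:ℂ) * (2 * Real.pi * Complex.I * τ / h)
          + 2 * Real.pi * Complex.I * (-(N:ℂ)) * τ / h = 0 by ring, Complex.exp_zero]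
    calc Complex.exp (-(2 * Real.pi * Complex.I * Λ * τ / h)) * f τ
        = (q ^ N * E) * (Complex.exp (-(2 * Real.pi * Complex.I * Λ * τ / h)) * f τ) := by
          rw [hqNE, one_mul]
      _ = q ^ N * (Complex.exp (-(2 * Real.pi * Complex.I * Λ * τ / h)) * f τ) * E := by ring
end

section
/- Let m ≥ 1, h > 0, Y > 0. Let P ∈ GL_m(ℂ), let μ₁, …, μ_m ∈ [0,1), and set A = P·diag(exp(2πiμ₁), …, exp(2πiμ_m))·P^{−1} ∈ GL_m(ℂ). Let X : {τ ∈ ℂ : Im τ > Y} → ℂ^m be holomorphic (componentwise) with X(τ + h) = A·X(τ) for all τ with Im τ > Y, and suppose X has moderate growth at ∞: there exist ν ∈ ℝ and Y′ > Y such that ‖X(τ)‖ < exp(ν·Im τ) whenever Im τ > Y′. Then there exist an integer M and vectors X_[n] ∈ ℂ^m for n ≥ −M such that for every τ with Im τ > Y, X(τ) = P·diag(q̃^{μ₁}, …, q̃^{μ_m})·P^{−1}·Σ_{n=−M}^{∞} X_[n]·q̃^n, where q̃ = exp(2πiτ/h), q̃^{μ} = exp(2πiμτ/h), and the series converges absolutely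 for Im τ > Y. -/
open Complex Filter Function.Periodic

/-- Euclidean norm on `ℂ^m`. -/
noncomputable def vnorm {m : ℕ} (v : Fin m → ℂ) : ℝ :=
  Real.sqrt (∑ i, ‖v i‖ ^ 2)

lemma abs_le_vnorm {m : ℕ} (v : Fin m → ℂ) (j : Fin m) : ‖v j‖ ≤ vnorm v := by
  rw [vnorm, show ‖v j‖ = Real.sqrt (‖v j‖ ^ 2) by
    rw [Real.sqrt_sq (norm_nonneg _)]]
  exact Real.sqrt_le_sqrt (Finset.single_le_sum (f := fun i => ‖v i‖ ^ 2)
    (fun i _ => by positivity) (Finset.mem_univ j))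

lemma abs_exp_neg_mu (h : ℝ) (c : ℝ) (z : ℂ) :
    ‖Complex.exp (-(2 * Real.pi * Complex.I * c * z / h))‖ =
      Real.exp (2 * Real.pi * c * z.im / h) := by
  rw [Complex.norm_exp]
  congr 1
  have : (-(2 * Real.pi * Complex.I * c * z / h) : ℂ) =
      Complex.I * (((-(2 * Real.pi * c / h) : ℝ)) : ℂ) * z := by
    push_cast; field_simp
  rw [this]
  simp [Complex.mul_re, Complex.mul_im]
  ring

theorem stmt10 {m : ℕ} (hm : 1 ≤ m) (h Y : ℝ) (hh : 0 < h) (hY : 0 < Y)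
    (P : GL (Fin m) ℂ) (μ : Fin m → ℝ) (hμ : ∀ i, μ i ∈ Set.Ico (0 : ℝ) 1)
    (X : ℂ → Fin m → ℂ)
    (hhol : ∀ i, DifferentiableOn ℂ (fun τ => X τ i) {τ : ℂ | Y < τ.im})
    (hper : ∀ τ : ℂ, Y < τ.im →
      X (τ + h)
        = ((P : Matrix (Fin m) (Fin m) ℂ)
            * Matrix.diagonal (fun i => Complex.exp (2 * Real.pi * Complex.I * μ i))
            * ((P⁻¹ : GL (Fin m) ℂ) : Matrix (Fin m) (Fin m) ℂ)).mulVec (X τ))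
    (hgrow : ∃ ν : ℝ, ∃ Y' : ℝ, Y < Y' ∧
      ∀ τ : ℂ, Y' < τ.im → vnorm (X τ) < Real.exp (ν * τ.im)) :
    ∃ M : ℤ, ∃ a : ℕ → Fin m → ℂ, ∀ τ : ℂ, Y < τ.im →
      (∀ i : Fin m, Summable (fun n : ℕ =>
        ‖a n i * Complex.exp (2 * Real.pi * Complex.I * ((n : ℂ) - M) * τ / h)‖)) ∧
      X τ = ((P : Matrix (Fin m) (Fin m) ℂ)
          * Matrix.diagonal (fun i => Complex.exp (2 * Real.pi * Complex.I * μ i * τ / h))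
          * ((P⁻¹ : GL (Fin m) ℂ) : Matrix (Fin m) (Fin m) ℂ)).mulVec
        (fun i => ∑' n : ℕ,
          a n i * Complex.exp (2 * Real.pi * Complex.I * ((n : ℂ) - M) * τ / h)) := by
  obtain ⟨ν, Y', hYY', hXbd⟩ := hgrow
  have hhc : (h : ℂ) ≠ 0 := by exact_mod_cast hh.ne'
  set Pm : Matrix (Fin m) (Fin m) ℂ := (P : Matrix (Fin m) (Fin m) ℂ) with hPm
  set Q : Matrix (Fin m) (Fin m) ℂ := ((P⁻¹ : GL (Fin m) ℂ) : Matrix (Fin m) (Fin m) ℂ) with hQ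
  have hQP : Q * Pm = 1 := P.inv_mul
  have hPQ : Pm * Q = 1 := P.mul_inv
  have hopen : IsOpen {τ : ℂ | Y < τ.im} := isOpen_lt continuous_const Complex.continuous_im
  -- the scalar functions g i
  set g : Fin m → ℂ → ℂ := fun i z =>
    Complex.exp (-(2 * Real.pi * Complex.I * μ i * z / h)) * (Q.mulVec (X z)) i with hg
  -- one-step periodicity
  have hg1 : ∀ i (z : ℂ), Y < z.im → g i (z + h) = g i z := by
    intro i z hz
    have hexp : Complex.exp (-(2 * (Real.pi:ℂ) * Complex.I * (μ i : ℂ) * (z + h) / h))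
        = Complex.exp (-(2 * (Real.pi:ℂ) * Complex.I * (μ i : ℂ) * z / h))
          * Complex.exp (-(2 * (Real.pi:ℂ) * Complex.I * (μ i : ℂ))) := by
      rw [← Complex.exp_add]
      congr 1
      field_simp
      ring
    have hkey : Q * ((Pm * Matrix.diagonal (fun j => Complex.exp (2 * (Real.pi:ℂ) * Complex.I * (μ j : ℂ)))) * Q)
        = Matrix.diagonal (fun j => Complex.exp (2 * (Real.pi:ℂ) * Complex.I * (μ j : ℂ))) * Q := by
      rw [← mul_assoc, ← mul_assoc, hQP, one_mul]
    have hcancel : Complex.exp (-(2 * (Real.pi:ℂ) * Complex.I * (μ i : ℂ)))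
        * Complex.exp (2 * (Real.pi:ℂ) * Complex.I * (μ i : ℂ)) = 1 := by
      rw [← Complex.exp_add]
      simp
    simp only [hg]
    rw [hper z hz, Matrix.mulVec_mulVec, hkey, ← Matrix.mulVec_mulVec,
      Matrix.mulVec_diagonal, hexp]
    rw [mul_assoc, ← mul_assoc (Complex.exp (-(2 * (Real.pi:ℂ) * Complex.I * (μ i : ℂ)))),
      hcancel, one_mul]
  -- integer periodicity
  have hgZ : ∀ i (k : ℤ) (z : ℂ), Y < z.im → g i (z + k * h) = g i z := by
    intro i k
    induction k using Int.induction_on with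
    | zero => intro z hz; simp
    | succ k ih =>
        intro z hz
        push_cast
        push_cast at ih
        have h1 : z + ((k : ℂ) + 1) * h = (z + (k : ℂ) * h) + h := by ring
        rw [h1, hg1 i _ (by simpa using hz), ih z hz]
    | pred k ih =>
        intro z hz
        push_cast
        push_cast at ih
        have h1 : z + (-(k : ℂ) - 1) * h + h = z + (-(k : ℂ)) * h := by ring
        have h2 := hg1 i (z + (-(k : ℂ) - 1) * h) (by simpa using hz)
        rw [h1] at h2
        exact h2.symm.trans (ih z hz)
  -- differentiability of g
  have hgdiff : ∀ i (z : ℂ), Y < z.im → DifferentiableAt ℂ (g i) z := by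
    intro i z hz
    have he : DifferentiableAt ℂ
        (fun z : ℂ => Complex.exp (-(2 * (Real.pi:ℂ) * Complex.I * (μ i : ℂ) * z / h))) z := by
      apply DifferentiableAt.cexp
      apply DifferentiableAt.neg
      apply DifferentiableAt.div_const
      exact (differentiableAt_const _).mul differentiableAt_id
    have hs : DifferentiableAt ℂ (fun z => (Q.mulVec (X z)) i) z := by
      have : (fun z => (Q.mulVec (X z)) i) = fun z => ∑ j, Q i j * X z j := by
        funext w; simp [Matrix.mulVec, dotProduct]
      rw [this]
      apply DifferentiableAt.fun_sum
      intro j _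
      exact (differentiableAt_const _).mul
        ((hhol j z hz).differentiableAt (hopen.mem_nhds hz))
    exact he.mul hs
  -- globally periodic extension
  set f : Fin m → ℂ → ℂ := fun i z => g i (invQParam h (qParam h z)) with hf
  have hqper : ∀ z : ℂ, qParam h (z + h) = qParam h z := by
    intro z
    show Complex.exp _ = Complex.exp _
    rw [show (2 * (Real.pi:ℂ) * Complex.I * (z + h) / h)
        = 2 * (Real.pi:ℂ) * Complex.I * z / h + 2 * (Real.pi:ℂ) * Complex.I by
      field_simp]
    rw [Complex.exp_add, Complex.exp_two_pi_mul_I, mul_one]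
  have hfper : ∀ i, Function.Periodic (f i) h := by
    intro i z
    simp only [hf]
    rw [hqper]
  have hfg : ∀ i (z : ℂ), Y < z.im → f i z = g i z := by
    intro i z hz
    obtain ⟨k, hk⟩ := qParam_left_inv_mod_period hh.ne' z
    simp only [hf]
    rw [hk]
    exact hgZ i k z hz
  have hfdiff : ∀ i (z : ℂ), Y < z.im → DifferentiableAt ℂ (f i) z := by
    intro i z hz
    have hev : f i =ᶠ[nhds z] g i :=
      Filter.eventuallyEq_of_mem (hopen.mem_nhds hz) (fun w hw => hfg i w hw)
    exact (hgdiff i z hz).congr_of_eventuallyEq hev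
  -- the truncation exponent
  set M0 : ℕ := ⌈h * ν / (2 * Real.pi)⌉₊ + 1 with hM0
  set fh : Fin m → ℂ → ℂ := fun i z => f i z * (qParam h z) ^ M0 with hfh
  have hqdiff : Differentiable ℂ (qParam h) := by
    have : qParam h = fun z : ℂ => Complex.exp (2 * (Real.pi:ℂ) * Complex.I * z / h) := rfl
    rw [this]
    apply Differentiable.cexp
    apply Differentiable.div_const
    exact (differentiable_const _).mul differentiable_id
  have hfhper : ∀ i, Function.Periodic (fh i) h := by
    intro i z
    simp only [hfh]
    rw [hqper z, hfper i z]
  have hfhdiff : ∀ i (z : ℂ), Y < z.im → DifferentiableAt ℂ (fh i) z := by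
    intro i z hz
    exact (hfdiff i z hz).mul ((hqdiff z).pow M0)
  have hIY : ∀ᶠ z : ℂ in Filter.comap Complex.im Filter.atTop, Y < z.im := by
    rw [Filter.eventually_comap]
    filter_upwards [Filter.eventually_gt_atTop Y] with x hx z hz
    rwa [hz]
  have hIY' : ∀ᶠ z : ℂ in Filter.comap Complex.im Filter.atTop, Y' < z.im := by
    rw [Filter.eventually_comap]
    filter_upwards [Filter.eventually_gt_atTop Y'] with x hx z hz
    rwa [hz]
  have h_hol : ∀ i, ∀ᶠ z : ℂ in Filter.comap Complex.im Filter.atTop,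
      DifferentiableAt ℂ (fh i) z := by
    intro i
    filter_upwards [hIY] with z hz
    exact hfhdiff i z hz
  set C : Fin m → ℝ := fun i => ∑ j, ‖Q i j‖ with hC
  have hCnn : ∀ i, 0 ≤ C i := by
    intro i
    exact Finset.sum_nonneg fun j _ => norm_nonneg _
  have hQv : ∀ i (z : ℂ), ‖(Q.mulVec (X z)) i‖ ≤ C i * vnorm (X z) := by
    intro i z
    have hrepr : (Q.mulVec (X z)) i = ∑ j, Q i j * X z j := by
      simp [Matrix.mulVec, dotProduct]
    rw [hrepr]
    calc ‖∑ j, Q i j * X z j‖ ≤ ∑ j, ‖Q i j * X z j‖ :=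
          norm_sum_le _ _
      _ ≤ ∑ j, ‖Q i j‖ * vnorm (X z) := by
          refine Finset.sum_le_sum fun j _ => ?_
          rw [norm_mul]
          exact mul_le_mul_of_nonneg_left (abs_le_vnorm _ j) (norm_nonneg _)
      _ = C i * vnorm (X z) := by rw [hC, Finset.sum_mul]
  have hM0' : h * ν + 2 * Real.pi ≤ 2 * Real.pi * (M0 : ℝ) := by
    have hpi := Real.two_pi_pos
    have h1 : h * ν / (2 * Real.pi) ≤ (⌈h * ν / (2 * Real.pi)⌉₊ : ℝ) := Nat.le_ceil _
    have h2 : h * ν ≤ (⌈h * ν / (2 * Real.pi)⌉₊ : ℝ) * (2 * Real.pi) :=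
      (div_le_iff₀ hpi).mp h1
    have h3 : (M0 : ℝ) = (⌈h * ν / (2 * Real.pi)⌉₊ : ℝ) + 1 := by
      rw [hM0]; push_cast; ring
    rw [h3]; nlinarith
  have hfhbd : ∀ i, BoundedAtFilter (Filter.comap Complex.im Filter.atTop) (fh i) := by
    intro i
    rw [BoundedAtFilter, Asymptotics.isBigO_iff]
    refine ⟨C i, ?_⟩
    filter_upwards [hIY'] with z hz
    have hzY : Y < z.im := hYY'.trans hz
    have hzim0 : 0 ≤ z.im := le_of_lt (hY.trans hzY)
    have habsq : ‖qParam h z‖ = Real.exp (-2 * Real.pi * z.im / h) :=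
      norm_qParam h z
    have hgb : ‖g i z‖
        ≤ Real.exp (2 * Real.pi * z.im / h) * (C i * Real.exp (ν * z.im)) := by
      simp only [hg, norm_mul]
      rw [abs_exp_neg_mu h (μ i) z]
      have e1 : Real.exp (2 * Real.pi * (μ i) * z.im / h) ≤ Real.exp (2 * Real.pi * z.im / h) := by
        apply Real.exp_le_exp.mpr
        rw [div_le_div_iff₀ hh hh]
        nlinarith [mul_nonneg (sub_nonneg.mpr (hμ i).2.le)
          (mul_nonneg (mul_nonneg (mul_nonneg (by norm_num : (0:ℝ) ≤ 2) Real.pi_pos.le)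
            hzim0) hh.le)]
      have e2 : ‖(Q.mulVec (X z)) i‖ ≤ C i * Real.exp (ν * z.im) := by
        refine (hQv i z).trans ?_
        exact mul_le_mul_of_nonneg_left (hXbd z hz).le (hCnn i)
      exact mul_le_mul e1 e2 (norm_nonneg _) (Real.exp_nonneg _)
    calc ‖fh i z‖ = ‖g i z‖ * Real.exp (-2 * Real.pi * z.im / h) ^ M0 := by
          simp only [hfh, norm_mul, norm_pow, habsq, hfg i z hzY]
      _ ≤ (Real.exp (2 * Real.pi * z.im / h) * (C i * Real.exp (ν * z.im)))
            * Real.exp (-2 * Real.pi * z.im / h) ^ M0 := by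
          exact mul_le_mul_of_nonneg_right hgb (pow_nonneg (Real.exp_nonneg _) _)
      _ = C i * Real.exp ((2 * Real.pi / h + ν - 2 * Real.pi * M0 / h) * z.im) := by
          rw [← Real.exp_nat_mul]
          rw [show Real.exp (2 * Real.pi * z.im / h) * (C i * Real.exp (ν * z.im))
                * Real.exp ((M0:ℝ) * (-2 * Real.pi * z.im / h))
              = C i * (Real.exp (2 * Real.pi * z.im / h) * Real.exp (ν * z.im)
                * Real.exp ((M0:ℝ) * (-2 * Real.pi * z.im / h))) from by ring]
          rw [← Real.exp_add, ← Real.exp_add]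
          congr 2
          field_simp
          try ring
      _ ≤ C i * 1 := by
          apply mul_le_mul_of_nonneg_left ?_ (hCnn i)
          rw [Real.exp_le_one_iff]
          apply mul_nonpos_of_nonpos_of_nonneg ?_ hzim0
          rw [show 2 * Real.pi / h + ν - 2 * Real.pi * (M0:ℝ) / h
              = (2 * Real.pi + ν * h - 2 * Real.pi * M0) / h by field_simp; try ring]
          apply div_nonpos_of_nonpos_of_nonneg ?_ hh.le
          nlinarith
      _ ≤ C i * ‖(1 : ℂ → ℝ) z‖ := by simp
  -- cusp functions
  set G : Fin m → ℂ → ℂ := fun i => cuspFunction h (fh i) with hG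
  set r : ℝ := Real.exp (-2 * Real.pi * Y / h) with hr
  have hr0 : 0 < r := Real.exp_pos _
  have hGdiff : ∀ i, DifferentiableOn ℂ (G i) (Metric.ball 0 r) := by
    intro i q hq
    rcases eq_or_ne q 0 with h0 | h0
    · apply DifferentiableAt.differentiableWithinAt
      rw [h0]
      exact differentiableAt_cuspFunction_zero hh (hfhper i) (h_hol i) (hfhbd i)
    · apply DifferentiableAt.differentiableWithinAt
      have hlt : ‖q‖ < r := by
        simpa [Metric.mem_ball, Complex.dist_eq] using hq
      have him : Y < (invQParam h q).im := by
        rw [im_invQParam]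
        have habs0 : 0 < ‖q‖ := norm_pos_iff.mpr h0
        have hlog : Real.log ‖q‖ < -2 * Real.pi * Y / h := by
          calc Real.log ‖q‖ < Real.log r := Real.log_lt_log habs0 hlt
            _ = -2 * Real.pi * Y / h := by rw [hr, Real.log_exp]
        have hneg : -h / (2 * Real.pi) < 0 :=
          div_neg_of_neg_of_pos (neg_lt_zero.mpr hh) Real.two_pi_pos
        have := mul_lt_mul_of_neg_left hlog hneg
        calc Y = -h / (2 * Real.pi) * (-2 * Real.pi * Y / h) := by
              field_simp
          _ < -h / (2 * Real.pi) * Real.log ‖q‖ := this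
      have hq' : q = qParam h (invQParam h q) := (qParam_right_inv hh.ne' h0).symm
      rw [hq']
      exact differentiableAt_cuspFunction hh.ne' (hfhper i) (hfhdiff i _ him)
  have hps : ∀ i (R : NNReal), 0 < R → (R : ℝ) < r →
      HasFPowerSeriesOnBall (G i) (cauchyPowerSeries (G i) 0 R) 0 R := by
    intro i R hR0 hRr
    exact ((hGdiff i).mono (Metric.closedBall_subset_ball hRr)).hasFPowerSeriesOnBall hR0
  set R1 : NNReal := (r / 2).toNNReal with hR1
  have hR1pos : 0 < R1 := by
    rw [hR1, Real.toNNReal_pos]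
    positivity
  have hR1r : (R1 : ℝ) < r := by
    rw [hR1, Real.coe_toNNReal _ (by positivity)]
    linarith
  set p : Fin m → FormalMultilinearSeries ℂ ℂ ℂ :=
    fun j => cauchyPowerSeries (G j) 0 R1 with hp
  have hps1 : ∀ i, HasFPowerSeriesOnBall (G i) (p i) 0 R1 := fun i => hps i R1 hR1pos hR1r
  -- conclusion
  refine ⟨(M0 : ℤ), fun n i => ∑ j, Pm i j * (p j).coeff n, ?_⟩
  intro τ hτ
  set q : ℂ := qParam h τ with hqdef
  have hq0 : q ≠ 0 := Complex.exp_ne_zero _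
  have hqr : ‖q‖ < r := (norm_qParam_lt_iff hh Y τ).mpr hτ
  set R' : NNReal := ((‖q‖ + r) / 2).toNNReal with hR'
  have hcoe : (R' : ℝ) = (‖q‖ + r) / 2 := Real.coe_toNNReal _ (by positivity)
  have hR'pos : 0 < R' := by
    rw [hR', Real.toNNReal_pos]
    positivity
  have hR'r : (R' : ℝ) < r := by rw [hcoe]; linarith
  have hqR' : ‖q‖ < (R' : ℝ) := by rw [hcoe]; linarith
  have hball' : ∀ j, HasFPowerSeriesOnBall (G j) (p j) 0 R' := by
    intro j
    have h1 := hps j R' hR'pos hR'r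
    have heq : p j = cauchyPowerSeries (G j) 0 R' :=
      (hps1 j).hasFPowerSeriesAt.eq_formalMultilinearSeries h1.hasFPowerSeriesAt
    rw [heq]
    exact h1
  have hmem : q ∈ Metric.eball (0 : ℂ) R' := by
    rw [mem_emetric_ball_zero_iff]
    exact_mod_cast ENNReal.coe_lt_coe.mpr
      (show ‖q‖₊ < R' by rwa [← NNReal.coe_lt_coe, coe_nnnorm])
  have hSum : ∀ j, HasSum (fun n => (p j) n fun _ => q) (G j q) := by
    intro j
    simpa using (hball' j).hasSum hmem
  have hNorm : ∀ j, Summable (fun n => ‖(p j) n fun _ => q‖) := by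
    intro j
    exact (p j).summable_norm_apply (EMetric.ball_subset_ball (hball' j).r_le hmem)
  -- the exponential factors
  have hqe : q = Complex.exp (2 * (Real.pi:ℂ) * Complex.I * τ / h) := rfl
  set c : ℂ := Complex.exp (-(2 * (Real.pi:ℂ) * Complex.I * (M0 : ℂ) * τ / h)) with hcdef
  have he : ∀ n : ℕ, Complex.exp (2 * (Real.pi:ℂ) * Complex.I * ((n : ℂ) - ((M0 : ℤ) : ℂ)) * τ / h)
      = q ^ n * c := by
    intro n
    rw [hqe, hcdef, ← Complex.exp_nat_mul, ← Complex.exp_add]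
    congr 1
    push_cast
    ring
  have hc1 : q ^ M0 * c = 1 := by
    rw [hqe, hcdef, ← Complex.exp_nat_mul, ← Complex.exp_add,
      show (M0 : ℂ) * (2 * (Real.pi:ℂ) * Complex.I * τ / h)
          + -(2 * (Real.pi:ℂ) * Complex.I * (M0 : ℂ) * τ / h) = 0 from by ring,
      Complex.exp_zero]
  have hGq : ∀ j, G j q = g j τ * (q ^ M0) := by
    intro j
    have h0 : G j q = fh j τ := eq_cuspFunction hh.ne' (hfhper j) τ
    rw [h0]
    simp only [hfh]
    rw [hfg j τ hτ]
  have hgsum : ∀ j, HasSum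
      (fun n => (p j).coeff n
        * Complex.exp (2 * (Real.pi:ℂ) * Complex.I * ((n : ℂ) - ((M0 : ℤ) : ℂ)) * τ / h))
      (g j τ) := by
    intro j
    have h1 := (hSum j).mul_right c
    have h2 : (fun n => ((p j) n fun _ => q) * c)
        = fun n => (p j).coeff n
            * Complex.exp (2 * (Real.pi:ℂ) * Complex.I * ((n : ℂ) - ((M0 : ℤ) : ℂ)) * τ / h) := by
      funext n
      rw [he n, FormalMultilinearSeries.apply_eq_pow_smul_coeff, smul_eq_mul]
      ring
    rw [h2] at h1
    have h3 : G j q * c = g j τ := by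
      rw [hGq j, mul_assoc, hc1, mul_one]
    rwa [h3] at h1
  have hjs : ∀ j, Summable (fun n => ‖(p j).coeff n
      * Complex.exp (2 * (Real.pi:ℂ) * Complex.I * ((n : ℂ) - ((M0 : ℤ) : ℂ)) * τ / h)‖) := by
    intro j
    have h1 := (hNorm j).mul_right ‖c‖
    apply h1.congr
    intro n
    rw [he n, FormalMultilinearSeries.apply_eq_pow_smul_coeff, smul_eq_mul,
      norm_mul, norm_mul, norm_mul, norm_pow]
    ring
  constructor
  · -- summability
    intro i
    beta_reduce
    have hbig : Summable (fun n => ∑ j, ‖Pm i j‖ * ‖(p j).coeff n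
        * Complex.exp (2 * (Real.pi:ℂ) * Complex.I * ((n : ℂ) - ((M0 : ℤ) : ℂ)) * τ / h)‖) :=
      summable_sum fun j _ => (hjs j).mul_left _
    apply Summable.of_nonneg_of_le (fun n => norm_nonneg _) (fun n => ?_) hbig
    rw [Finset.sum_mul]
    refine (norm_sum_le _ _).trans ?_
    refine Finset.sum_le_sum fun j _ => ?_
    rw [mul_assoc, norm_mul]
  · -- the q-expansion identity
    beta_reduce
    have hvec : (fun i => ∑' n : ℕ, (∑ j, Pm i j * (p j).coeff n)
        * Complex.exp (2 * (Real.pi:ℂ) * Complex.I * ((n : ℂ) - ((M0 : ℤ) : ℂ)) * τ / h))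
        = Pm.mulVec (fun j => g j τ) := by
      funext i
      have h1 : ∀ n : ℕ, (∑ j, Pm i j * (p j).coeff n)
          * Complex.exp (2 * (Real.pi:ℂ) * Complex.I * ((n : ℂ) - ((M0 : ℤ) : ℂ)) * τ / h)
          = ∑ j, Pm i j * ((p j).coeff n
            * Complex.exp (2 * (Real.pi:ℂ) * Complex.I * ((n : ℂ) - ((M0 : ℤ) : ℂ)) * τ / h)) := by
        intro n
        rw [Finset.sum_mul]
        exact Finset.sum_congr rfl fun j _ => mul_assoc _ _ _
      rw [tsum_congr h1, Summable.tsum_finsetSum (fun j _ => ((hgsum j).summable.mul_left (Pm i j)))]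
      rw [show Pm.mulVec (fun j => g j τ) i = ∑ j, Pm i j * g j τ from by
        simp [Matrix.mulVec, dotProduct]]
      refine Finset.sum_congr rfl fun j _ => ?_
      rw [tsum_mul_left, (hgsum j).tsum_eq]
    rw [hvec, Matrix.mulVec_mulVec, mul_assoc, hQP, mul_one, ← Matrix.mulVec_mulVec]
    have hDg : (Matrix.diagonal
        (fun i => Complex.exp (2 * (Real.pi:ℂ) * Complex.I * (μ i : ℂ) * τ / h))).mulVec
        (fun j => g j τ) = Q.mulVec (X τ) := by
      funext i
      rw [Matrix.mulVec_diagonal]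
      simp only [hg]
      rw [← mul_assoc, ← Complex.exp_add,
        show 2 * (Real.pi:ℂ) * Complex.I * (μ i : ℂ) * τ / h
            + -(2 * (Real.pi:ℂ) * Complex.I * (μ i : ℂ) * τ / h) = 0 from by ring,
        Complex.exp_zero, one_mul]
    rw [hDg, Matrix.mulVec_mulVec, hPQ, Matrix.one_mulVec]
end

section
/- Let γ₀ = (a₀ b₀; c₀ d₀) be a 2×2 real matrix with c₀ ≠ 0, and let γ be a 2×2 real matrix with rows r₁ and r₂. Let γ̃ = γ₀·γ have rows r̃₁ and r̃₂. Then either ‖r₁‖ ≤ max{1, 2|d₀/c₀|}·‖r₂‖ or ‖r̃₁‖ ≤ (2(|a₀|+|b₀|)/|c₀|)·‖r̃₂‖, where ‖·‖ denotes the Euclidean norm on ℝ². -/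
/-- Euclidean norm of a vector in `ℝ²`. -/
noncomputable def rnorm2 (v : Fin 2 → ℝ) : ℝ :=
  Real.sqrt (v 0 ^ 2 + v 1 ^ 2)

lemma rnorm2_eq_norm (v : Fin 2 → ℝ) :
    rnorm2 v = ‖(WithLp.equiv 2 (Fin 2 → ℝ)).symm v‖ := by
  rw [EuclideanSpace.norm_eq, Fin.sum_univ_two, rnorm2]
  simp [Real.norm_eq_abs, sq_abs]

lemma rnorm2_nonneg (v : Fin 2 → ℝ) : 0 ≤ rnorm2 v := Real.sqrt_nonneg _

lemma rnorm2_comb_le (a b : ℝ) (x y : Fin 2 → ℝ) :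
    rnorm2 (fun i => a * x i + b * y i) ≤ |a| * rnorm2 x + |b| * rnorm2 y := by
  rw [rnorm2_eq_norm, rnorm2_eq_norm, rnorm2_eq_norm]
  set X := (WithLp.equiv 2 (Fin 2 → ℝ)).symm x
  set Y := (WithLp.equiv 2 (Fin 2 → ℝ)).symm y
  have : (WithLp.equiv 2 (Fin 2 → ℝ)).symm (fun i => a * x i + b * y i)
      = a • X + b • Y := rfl
  rw [this]
  calc ‖a • X + b • Y‖ ≤ ‖a • X‖ + ‖b • Y‖ := norm_add_le _ _
  _ = |a| * ‖X‖ + |b| * ‖Y‖ := by rw [norm_smul, norm_smul]; simp [Real.norm_eq_abs]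

lemma rnorm2_comb_ge (a b : ℝ) (x y : Fin 2 → ℝ) :
    |a| * rnorm2 x - |b| * rnorm2 y ≤ rnorm2 (fun i => a * x i + b * y i) := by
  rw [rnorm2_eq_norm, rnorm2_eq_norm, rnorm2_eq_norm]
  set X := (WithLp.equiv 2 (Fin 2 → ℝ)).symm x
  set Y := (WithLp.equiv 2 (Fin 2 → ℝ)).symm y
  have h : (WithLp.equiv 2 (Fin 2 → ℝ)).symm (fun i => a * x i + b * y i)
      = a • X + b • Y := rfl
  rw [h]
  have h2 : ‖a • X‖ = ‖(a • X + b • Y) - b • Y‖ := by rw [add_sub_cancel_right]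
  have h3 := norm_sub_le (a • X + b • Y) (b • Y)
  rw [← h2, norm_smul, norm_smul, Real.norm_eq_abs, Real.norm_eq_abs] at h3
  linarith

theorem stmt13 (γ₀ γ : Matrix (Fin 2) (Fin 2) ℝ) (hc : γ₀ 1 0 ≠ 0) :
    rnorm2 (γ 0) ≤ max 1 (2 * |γ₀ 1 1 / γ₀ 1 0|) * rnorm2 (γ 1) ∨
    rnorm2 ((γ₀ * γ) 0) ≤ 2 * (|γ₀ 0 0| + |γ₀ 0 1|) / |γ₀ 1 0| * rnorm2 ((γ₀ * γ) 1) := by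
  by_cases h : rnorm2 (γ 0) ≤ max 1 (2 * |γ₀ 1 1 / γ₀ 1 0|) * rnorm2 (γ 1)
  · exact Or.inl h
  right
  set a := γ₀ 0 0
  set b := γ₀ 0 1
  set c := γ₀ 1 0
  set d := γ₀ 1 1
  have hr0 : ((γ₀ * γ) 0 : Fin 2 → ℝ) = fun i => a * γ 0 i + b * γ 1 i := by
    funext i; simp [Matrix.mul_apply, Fin.sum_univ_two]; rfl
  have hr1 : ((γ₀ * γ) 1 : Fin 2 → ℝ) = fun i => c * γ 0 i + d * γ 1 i := by
    funext i; simp [Matrix.mul_apply, Fin.sum_univ_two]; rfl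
  rw [hr0, hr1]
  push_neg at h
  have hup := rnorm2_comb_le a b (γ 0) (γ 1)
  have hlow := rnorm2_comb_ge c d (γ 0) (γ 1)
  set X := rnorm2 (γ 0)
  set Y := rnorm2 (γ 1)
  set T1 := rnorm2 (fun i => a * γ 0 i + b * γ 1 i)
  set T2 := rnorm2 (fun i => c * γ 0 i + d * γ 1 i)
  have hy0 : (0:ℝ) ≤ Y := rnorm2_nonneg _
  have hylt : Y < X := by
    calc Y = 1 * Y := (one_mul _).symm
    _ ≤ max 1 (2 * |d / c|) * Y := mul_le_mul_of_nonneg_right (le_max_left _ _) hy0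
    _ < X := h
  have hdlt : 2 * |d / c| * Y < X :=
    lt_of_le_of_lt (mul_le_mul_of_nonneg_right (le_max_right _ _) hy0) h
  have hcpos : 0 < |c| := abs_pos.mpr hc
  have hd : 2 * |d| * Y < |c| * X := by
    rw [abs_div, show 2 * (|d| / |c|) * Y = 2 * |d| * Y / |c| by ring,
      div_lt_iff₀ hcpos] at hdlt
    nlinarith
  have hT2 : |c| * X / 2 ≤ T2 := by nlinarith
  rw [div_mul_eq_mul_div, le_div_iff₀ hcpos]
  have k1 : T1 * |c| ≤ (|a| * X + |b| * Y) * |c| :=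
    mul_le_mul_of_nonneg_right hup hcpos.le
  have k2 : |b| * Y ≤ |b| * X := mul_le_mul_of_nonneg_left hylt.le (abs_nonneg b)
  have k3 : 2 * (|a| + |b|) * (|c| * X / 2) ≤ 2 * (|a| + |b|) * T2 :=
    mul_le_mul_of_nonneg_left hT2 (by positivity)
  nlinarith [abs_nonneg a, abs_nonneg b]
end

section
/- Let h > 0, μ ∈ [0,1), B ≥ 0, C > 0, and let a : ℕ → ℂ. Suppose that for every τ ∈ ℍ the series Σ_{n=0}^{∞} a_n·exp(2πi(n+μ)τ/h) converges absolutely, and let f(τ) denote its sum. Suppose |f(x+iy)| ≤ C·y^{−B} for every x ∈ ℝ and every y with 0 < y ≤ 1. Then there is a constant C′ > 0 such that for every real X ≥ 1, Σ_{0 ≤ n ≤ X} |a_n|² ≤ C′·X^{2B}. -/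
open Complex MeasureTheory

set_option maxHeartbeats 2000000 in
lemma parseval_aux (h : ℝ) (hh : 0 < h) (μ : ℝ) (a : ℕ → ℂ) (y : ℝ)
    (hb : Summable fun n : ℕ => ‖a n‖ * Real.exp (-(2*Real.pi*((n:ℝ)+μ)/h * y))) :
    ∫ x in Set.Ioc (0:ℝ) h,
        ‖∑' n : ℕ, a n * Complex.exp (2 * Real.pi * Complex.I * ((n:ℂ) + μ) * ((x:ℂ) + (y:ℂ) * Complex.I) / h)‖ ^ 2
      = h * ∑' n : ℕ, (‖a n‖ * Real.exp (-(2*Real.pi*((n:ℝ)+μ)/h * y))) ^ 2 := by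
  set r : ℕ → ℝ := fun n => 2*Real.pi*((n:ℝ)+μ)/h with hrdef
  set b : ℕ → ℂ := fun n => a n * Complex.exp ((-(r n * y) : ℝ) : ℂ) with hbdef
  set e : ℕ → ℝ → ℂ := fun n x => Complex.exp (((r n * x : ℝ):ℂ) * Complex.I) with hedef
  have hbnorm : ∀ n, ‖b n‖ = ‖a n‖ * Real.exp (-(r n * y)) := by
    intro n
    simp [hbdef, Complex.norm_exp]
  have henorm : ∀ n x, ‖e n x‖ = 1 := by
    intro n x
    simp [hedef, Complex.norm_exp]
  have hsumb : Summable fun n => ‖b n‖ := by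
    have : (fun n => ‖b n‖) = fun n : ℕ => ‖a n‖ * Real.exp (-(2*Real.pi*((n:ℝ)+μ)/h * y)) := by
      funext n; rw [hbnorm]
    rw [this]; exact hb
  have hterm : ∀ (n : ℕ) (x : ℝ),
      a n * Complex.exp (2 * Real.pi * Complex.I * ((n:ℂ) + μ) * ((x:ℂ) + (y:ℂ) * Complex.I) / h)
        = b n * e n x := by
    intro n x
    have harg : 2 * Real.pi * Complex.I * ((n:ℂ) + μ) * ((x:ℂ) + (y:ℂ) * Complex.I) / h
        = ((r n * x : ℝ):ℂ) * Complex.I + ((-(r n * y) : ℝ) : ℂ) := by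
      simp only [hrdef]
      push_cast
      ring_nf
      rw [Complex.I_sq]
      ring
    rw [harg, Complex.exp_add, hbdef, hedef]
    ring
  set f : ℝ → ℂ := fun x => ∑' n, b n * e n x with hfdef
  have hfeq : ∀ x : ℝ, (∑' n : ℕ, a n * Complex.exp (2 * Real.pi * Complex.I * ((n:ℂ) + μ) * ((x:ℂ) + (y:ℂ) * Complex.I) / h)) = f x := by
    intro x; exact tsum_congr fun n => hterm n x
  have htermnorm : ∀ (n : ℕ) (x : ℝ), ‖b n * e n x‖ = ‖b n‖ := by
    intro n x; rw [norm_mul, henorm, mul_one]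
  have hcont : Continuous f := by
    refine continuous_tsum (fun n => ?_) hsumb (fun n x => (htermnorm n x).le)
    exact Continuous.mul continuous_const (Complex.continuous_exp.comp (by continuity))
  set F : ℕ × ℕ → ℝ → ℂ := fun p x => b p.1 * (starRingEnd ℂ) (b p.2) *
      Complex.exp ((((r p.1 - r p.2) * x : ℝ):ℂ) * Complex.I) with hFdef
  have hF : ∀ (p : ℕ × ℕ) (x : ℝ),
      (b p.1 * e p.1 x) * (starRingEnd ℂ) (b p.2 * e p.2 x) = F p x := by
    rintro ⟨n, m⟩ x
    have hconj : (starRingEnd ℂ) (e m x) = Complex.exp (((-(r m * x) : ℝ):ℂ) * Complex.I) := by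
      rw [hedef, ← Complex.exp_conj]
      push_cast
      simp
    have hee : e n x * Complex.exp (((-(r m * x) : ℝ):ℂ) * Complex.I)
        = Complex.exp ((((r n - r m) * x : ℝ):ℂ) * Complex.I) := by
      rw [show e n x = Complex.exp (((r n * x : ℝ):ℂ) * Complex.I) from rfl, ← Complex.exp_add]
      congr 1
      push_cast
      ring
    show (b n * e n x) * (starRingEnd ℂ) (b m * e m x)
        = b n * (starRingEnd ℂ) (b m) * Complex.exp ((((r n - r m) * x : ℝ):ℂ) * Complex.I)
    rw [map_mul, hconj, ← hee]
    ring
  have hmul : ∀ x : ℝ, f x * (starRingEnd ℂ) (f x) = ∑' p : ℕ × ℕ, F p x := by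
    intro x
    have h1 : (starRingEnd ℂ) (f x) = ∑' n, (starRingEnd ℂ) (b n * e n x) := by
      exact tsum_star
    have h2 : Summable fun n => ‖b n * e n x‖ := by
      simpa only [htermnorm] using hsumb
    have h3 : Summable fun n => ‖(starRingEnd ℂ) (b n * e n x)‖ := by
      simpa only [RCLike.norm_conj] using h2
    rw [h1, tsum_mul_tsum_of_summable_norm h2 h3]
    exact tsum_congr fun p => hF p x
  have hFcont : ∀ p : ℕ × ℕ, Continuous (F p) := by
    intro p
    refine Continuous.mul continuous_const (Complex.continuous_exp.comp ?_)
    exact (Complex.continuous_ofReal.comp ((continuous_const.mul continuous_id'))).mul continuous_const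
  have hFnorm : ∀ (p : ℕ × ℕ) (x : ℝ), ‖F p x‖ = ‖b p.1‖ * ‖b p.2‖ := by
    intro p x
    show ‖b p.1 * (starRingEnd ℂ) (b p.2) * Complex.exp ((((r p.1 - r p.2) * x : ℝ):ℂ) * Complex.I)‖ = _
    rw [norm_mul, norm_mul, RCLike.norm_conj]
    simp [Complex.norm_exp]
  have hFint : ∀ p : ℕ × ℕ, Integrable (F p) (volume.restrict (Set.Ioc (0:ℝ) h)) :=
    fun p => (hFcont p).integrableOn_Ioc
  have hmeas : (volume (Set.Ioc (0:ℝ) h)).toReal = h := by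
    rw [Real.volume_Ioc]
    simp [hh.le]
  have hFnormint : ∀ p : ℕ × ℕ, ∫ x in Set.Ioc (0:ℝ) h, ‖F p x‖ = h * (‖b p.1‖ * ‖b p.2‖) := by
    intro p
    have : (fun x => ‖F p x‖) = fun _ : ℝ => ‖b p.1‖ * ‖b p.2‖ := funext fun x => hFnorm p x
    rw [this, setIntegral_const, measureReal_def, hmeas, smul_eq_mul]
  have hprodsum : Summable fun p : ℕ × ℕ => ‖b p.1‖ * ‖b p.2‖ :=
    hsumb.mul_of_nonneg hsumb (fun n => norm_nonneg _) (fun n => norm_nonneg _)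
  have hIntSummable : Summable fun p : ℕ × ℕ => ∫ x in Set.Ioc (0:ℝ) h, ‖F p x‖ := by
    have : (fun p : ℕ × ℕ => ∫ x in Set.Ioc (0:ℝ) h, ‖F p x‖)
        = fun p : ℕ × ℕ => h * (‖b p.1‖ * ‖b p.2‖) := funext hFnormint
    rw [this]
    exact hprodsum.mul_left h
  have hinterchange : ∑' p : ℕ × ℕ, ∫ x in Set.Ioc (0:ℝ) h, F p x
      = ∫ x in Set.Ioc (0:ℝ) h, ∑' p : ℕ × ℕ, F p x :=
    MeasureTheory.integral_tsum_of_summable_integral_norm hFint hIntSummable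
  have hrne : ∀ n m : ℕ, n ≠ m → r n - r m ≠ 0 := by
    intro n m hnm
    have : r n - r m = 2 * Real.pi * ((n:ℝ) - m) / h := by
      show 2*Real.pi*((n:ℝ)+μ)/h - 2*Real.pi*((m:ℝ)+μ)/h = _
      field_simp
      ring
    rw [this]
    have hnm' : (n:ℝ) - m ≠ 0 := by
      intro hc
      exact hnm (Nat.cast_injective (by linarith [sub_eq_zero.mp hc] : (n:ℝ) = m))
    exact div_ne_zero (mul_ne_zero (mul_ne_zero two_ne_zero Real.pi_ne_zero) hnm') (ne_of_gt hh)
  have hInt : ∀ p : ℕ × ℕ, (∫ x in Set.Ioc (0:ℝ) h, F p x)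
      = if p.1 = p.2 then (h:ℂ) * (b p.1 * (starRingEnd ℂ) (b p.1)) else 0 := by
    rintro ⟨n, m⟩
    have hioc : (∫ x in Set.Ioc (0:ℝ) h, F (n, m) x) = ∫ x in (0:ℝ)..h, F (n, m) x :=
      (intervalIntegral.integral_of_le hh.le).symm
    rw [hioc]
    by_cases hnm : n = m
    · subst hnm
      rw [if_pos rfl]
      have : ∀ x : ℝ, F (n, n) x = b n * (starRingEnd ℂ) (b n) := by
        intro x
        show b n * (starRingEnd ℂ) (b n) * Complex.exp ((((r n - r n) * x : ℝ):ℂ) * Complex.I) = _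
        simp
      rw [intervalIntegral.integral_congr (g := fun _ => b n * (starRingEnd ℂ) (b n)) (fun x _ => this x)]
      rw [intervalIntegral.integral_const, sub_zero, Complex.real_smul]
    · simp only [if_neg hnm]
      set c : ℂ := ((r n - r m : ℝ):ℂ) * Complex.I with hcdef
      have hc : c ≠ 0 := by
        rw [hcdef]
        exact mul_ne_zero (Complex.ofReal_ne_zero.mpr (hrne n m hnm)) Complex.I_ne_zero
      have hFc : ∀ x : ℝ, F (n, m) x = b n * (starRingEnd ℂ) (b m) * Complex.exp (c * (x:ℂ)) := by
        intro x
        show b n * (starRingEnd ℂ) (b m) * Complex.exp ((((r n - r m) * x : ℝ):ℂ) * Complex.I) = _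
        congr 2
        rw [hcdef]
        push_cast
        ring
      rw [intervalIntegral.integral_congr (fun x _ => hFc x), intervalIntegral.integral_const_mul,
        integral_exp_mul_complex hc]
      have hch : c * (h:ℂ) = ((n:ℤ) - (m:ℤ) : ℂ) * (2 * Real.pi * Complex.I) := by
        rw [hcdef]
        have : ((r n - r m : ℝ):ℂ) * (h:ℂ) = 2 * Real.pi * ((n:ℂ) - (m:ℂ)) := by
          have hr' : (r n - r m) * h = 2 * Real.pi * ((n:ℝ) - m) := by
            show (2*Real.pi*((n:ℝ)+μ)/h - 2*Real.pi*((m:ℝ)+μ)/h) * h = _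
            field_simp
            ring
          calc ((r n - r m : ℝ):ℂ) * (h:ℂ) = (((r n - r m) * h : ℝ):ℂ) := by push_cast; ring
            _ = ((2 * Real.pi * ((n:ℝ) - m) : ℝ):ℂ) := by rw [hr']
            _ = 2 * Real.pi * ((n:ℂ) - (m:ℂ)) := by push_cast; ring
        calc ((r n - r m : ℝ):ℂ) * Complex.I * (h:ℂ)
            = ((r n - r m : ℝ):ℂ) * (h:ℂ) * Complex.I := by ring
          _ = 2 * Real.pi * ((n:ℂ) - (m:ℂ)) * Complex.I := by rw [this]
          _ = ((n:ℤ) - (m:ℤ) : ℂ) * (2 * Real.pi * Complex.I) := by push_cast; ring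
      rw [hch]
      have h1 : Complex.exp (((n:ℤ) - (m:ℤ) : ℂ) * (2 * Real.pi * Complex.I)) = 1 := by
        have := Complex.exp_int_mul_two_pi_mul_I ((n:ℤ) - (m:ℤ))
        simpa using this
      rw [h1]
      simp
  have hGsum : Summable (fun p : ℕ × ℕ => if p.1 = p.2 then (h:ℂ) * (b p.1 * (starRingEnd ℂ) (b p.1)) else 0) := by
    apply Summable.of_norm_bounded (hprodsum.mul_left h)
    rintro ⟨n, m⟩
    by_cases hnm : n = m
    · subst hnm
      rw [if_pos rfl, norm_mul, norm_mul, RCLike.norm_conj, Complex.norm_real, Real.norm_eq_abs,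
        abs_of_pos hh]
    · rw [if_neg hnm, norm_zero]
      have : 0 ≤ ‖b n‖ * ‖b m‖ := mul_nonneg (norm_nonneg _) (norm_nonneg _)
      positivity
  have key : ∑' p : ℕ × ℕ, (∫ x in Set.Ioc (0:ℝ) h, F p x) = ∑' n : ℕ, (h:ℂ) * (b n * (starRingEnd ℂ) (b n)) := by
    rw [tsum_congr hInt, hGsum.tsum_prod]
    refine tsum_congr fun n => ?_
    have h1 : ∀ m : ℕ, (if (n, m).1 = (n, m).2 then (h:ℂ) * (b (n, m).1 * (starRingEnd ℂ) (b (n, m).1)) else 0)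
        = (if m = n then (h:ℂ) * (b n * (starRingEnd ℂ) (b n)) else 0) := by
      intro m
      by_cases hm : n = m
      · subst hm; simp
      · rw [if_neg hm, if_neg (Ne.symm hm)]
    rw [tsum_congr h1, tsum_ite_eq]
  have hC2 : ∫ x in Set.Ioc (0:ℝ) h, f x * (starRingEnd ℂ) (f x) = ∑' n : ℕ, (h:ℂ) * (b n * (starRingEnd ℂ) (b n)) := by
    calc ∫ x in Set.Ioc (0:ℝ) h, f x * (starRingEnd ℂ) (f x)
        = ∫ x in Set.Ioc (0:ℝ) h, ∑' p : ℕ × ℕ, F p x := by simp only [hmul]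
      _ = ∑' p : ℕ × ℕ, (∫ x in Set.Ioc (0:ℝ) h, F p x) := hinterchange.symm
      _ = _ := key
  have hptreal : ∀ z : ℂ, z * (starRingEnd ℂ) z = ((‖z‖ ^ 2 : ℝ) : ℂ) := by
    intro z
    rw [Complex.mul_conj, Complex.sq_norm]
  have hreal : ∫ x in Set.Ioc (0:ℝ) h, ‖f x‖ ^ 2 = ∑' n : ℕ, h * ‖b n‖ ^ 2 := by
    have h1 : (∫ x in Set.Ioc (0:ℝ) h, ((‖f x‖ ^ 2 : ℝ) : ℂ))
        = ((∫ x in Set.Ioc (0:ℝ) h, ‖f x‖ ^ 2 : ℝ) : ℂ) := integral_ofReal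
    apply Complex.ofReal_inj.mp
    rw [← h1, Complex.ofReal_tsum]
    calc ∫ x in Set.Ioc (0:ℝ) h, ((‖f x‖ ^ 2 : ℝ) : ℂ)
        = ∫ x in Set.Ioc (0:ℝ) h, f x * (starRingEnd ℂ) (f x) := by simp only [hptreal]
      _ = ∑' n : ℕ, (h:ℂ) * (b n * (starRingEnd ℂ) (b n)) := hC2
      _ = ∑' n : ℕ, (((h * ‖b n‖ ^ 2 : ℝ)) : ℂ) := by
          refine tsum_congr fun n => ?_
          rw [hptreal]
          push_cast
          ring
  simp only [hfeq]
  rw [hreal, tsum_mul_left]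
  congr 1
  refine tsum_congr fun n => ?_
  rw [← hbnorm n]

lemma term_abs (h : ℝ) (μ : ℝ) (a : ℂ) (n : ℕ) (x y : ℝ) :
    ‖a * Complex.exp (2 * Real.pi * Complex.I * ((n:ℂ) + μ) * ((x:ℂ) + (y:ℂ) * Complex.I) / h)‖
      = ‖a‖ * Real.exp (-(2*Real.pi*((n:ℝ)+μ)/h * y)) := by
  have harg : 2 * Real.pi * Complex.I * ((n : ℂ) + μ) * ((x:ℂ) + (y:ℂ) * Complex.I) / h
      = ((2*Real.pi*((n:ℝ)+μ)/h * x : ℝ) : ℂ) * Complex.I + ((-(2*Real.pi*((n:ℝ)+μ)/h * y) : ℝ) : ℂ) := by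
    push_cast
    ring_nf
    rw [Complex.I_sq]
    ring
  rw [harg]
  simp [Complex.norm_exp]

theorem stmt15 (h : ℝ) (hh : 0 < h) (μ : ℝ) (hμ : μ ∈ Set.Ico (0 : ℝ) 1)
    (B C : ℝ) (hB : 0 ≤ B) (hC : 0 < C) (a : ℕ → ℂ)
    (hsum : ∀ τ : ℂ, 0 < τ.im →
      Summable (fun n : ℕ =>
        ‖a n * Complex.exp (2 * Real.pi * Complex.I * ((n : ℂ) + μ) * τ / h)‖))
    (hbd : ∀ x y : ℝ, 0 < y → y ≤ 1 →
      ‖∑' n : ℕ,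
          a n * Complex.exp (2 * Real.pi * Complex.I * ((n : ℂ) + μ) * (x + y * Complex.I) / h)‖
        ≤ C * y ^ (-B)) :
    ∃ C' > (0 : ℝ), ∀ X : ℝ, 1 ≤ X →
      ∑ n ∈ Finset.range (⌊X⌋₊ + 1), ‖a n‖ ^ 2 ≤ C' * X ^ (2 * B) := by
  refine ⟨Real.exp (8 * Real.pi / h) * C ^ 2, by positivity, ?_⟩
  intro X hX
  have hX0 : (0:ℝ) < X := lt_of_lt_of_le one_pos hX
  set y : ℝ := X⁻¹ with hydef
  have hy0 : 0 < y := by positivity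
  have hy1 : y ≤ 1 := by
    rw [hydef]
    exact inv_le_one_of_one_le₀ hX
  set t : ℕ → ℝ := fun n => ‖a n‖ * Real.exp (-(2*Real.pi*((n:ℝ)+μ)/h * y)) with htdef
  have ht0 : ∀ n, 0 ≤ t n := fun n => mul_nonneg (norm_nonneg _) (Real.exp_pos _).le
  have hb : Summable t := by
    have h0 := hsum (((0:ℝ):ℂ) + (y:ℝ) * Complex.I) (by simp [hy0])
    exact h0.congr fun n => term_abs h μ (a n) n 0 y
  have hS : Summable (fun n => t n ^ 2) := by
    have htend : Filter.Tendsto t Filter.atTop (nhds 0) := hb.tendsto_atTop_zero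
    have hev : ∀ᶠ n in Filter.atTop, t n < 1 := htend.eventually (gt_mem_nhds one_pos)
    refine Summable.of_norm_bounded_eventually hb ?_
    rw [Nat.cofinite_eq_atTop]
    filter_upwards [hev] with n hn
    rw [Real.norm_eq_abs, _root_.abs_of_nonneg (by positivity)]
    nlinarith [ht0 n]
  have hpar := parseval_aux h hh μ a y hb
  set g : ℝ → ℂ := fun x : ℝ => ∑' n : ℕ,
      a n * Complex.exp (2 * Real.pi * Complex.I * ((n:ℂ) + μ) * ((x:ℂ) + (y:ℂ) * Complex.I) / h) with hgdef
  have hcont : Continuous g := by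
    refine continuous_tsum (fun n => ?_) hb (fun n x => (term_abs h μ (a n) n x y).le)
    refine Continuous.mul continuous_const (Complex.continuous_exp.comp ?_)
    exact (continuous_const.mul (Complex.continuous_ofReal.add continuous_const)).div_const _
  have hint1 : MeasureTheory.IntegrableOn (fun x => ‖g x‖ ^ 2) (Set.Ioc (0:ℝ) h) :=
    ((continuous_norm.comp hcont).pow 2).integrableOn_Ioc
  have hmeas : (MeasureTheory.volume (Set.Ioc (0:ℝ) h)).toReal = h := by
    rw [Real.volume_Ioc]
    simp [hh.le]
  have hintle : ∫ x in Set.Ioc (0:ℝ) h, ‖g x‖ ^ 2 ≤ h * (C * y ^ (-B)) ^ 2 := by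
    have hconst : ∫ _x in Set.Ioc (0:ℝ) h, ((C * y ^ (-B)) ^ 2 : ℝ) = h * (C * y ^ (-B)) ^ 2 := by
      rw [MeasureTheory.setIntegral_const, measureReal_def, hmeas, smul_eq_mul]
    rw [← hconst]
    refine MeasureTheory.setIntegral_mono_on hint1 ?_ measurableSet_Ioc ?_
    · exact (MeasureTheory.integrableOn_const_iff).mpr (Or.inr measure_Ioc_lt_top)
    · intro x _
      exact pow_le_pow_left₀ (norm_nonneg _) (hbd x y hy0 hy1) 2
  have hSbound : (∑' n, t n ^ 2) ≤ (C * y ^ (-B)) ^ 2 := by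
    have := hpar ▸ hintle
    exact le_of_mul_le_mul_left (by linarith [this]) hh
  have hkey : ∀ n ∈ Finset.range (⌊X⌋₊ + 1),
      ‖a n‖ ^ 2 ≤ Real.exp (8 * Real.pi / h) * t n ^ 2 := by
    intro n hn
    have hnX : (n:ℝ) ≤ X := by
      have h1 : n ≤ ⌊X⌋₊ := Nat.lt_succ_iff.mp (Finset.mem_range.mp hn)
      calc (n:ℝ) ≤ (⌊X⌋₊ : ℝ) := Nat.cast_le.mpr h1
        _ ≤ X := Nat.floor_le hX0.le
    have hμ1 : μ < 1 := hμ.2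
    have hμ0 : 0 ≤ μ := hμ.1
    have hnμ : (n:ℝ) + μ ≤ 2 * X := by linarith
    have hu : 2 * (2*Real.pi*((n:ℝ)+μ)/h * y) ≤ 8 * Real.pi / h := by
      rw [hydef]
      have heq : 2 * (2*Real.pi*((n:ℝ)+μ)/h * X⁻¹) = 4*Real.pi*((n:ℝ)+μ) / (h*X) := by
        field_simp
        ring
      rw [heq, div_le_div_iff₀ (by positivity) hh]
      nlinarith [Real.pi_pos, mul_pos Real.pi_pos hh, mul_pos (mul_pos Real.pi_pos hh) hX0]
    have hexp1 : (1:ℝ) ≤ Real.exp (8 * Real.pi / h - 2 * (2*Real.pi*((n:ℝ)+μ)/h * y)) :=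
      Real.one_le_exp (by linarith)
    have ht2 : t n ^ 2 = ‖a n‖ ^ 2 * Real.exp (-(2 * (2*Real.pi*((n:ℝ)+μ)/h * y))) := by
      rw [htdef]
      show (‖a n‖ * Real.exp (-(2*Real.pi*((n:ℝ)+μ)/h * y))) ^ 2 = _
      rw [mul_pow, sq (Real.exp _), ← Real.exp_add]
      ring_nf
    calc ‖a n‖ ^ 2 = ‖a n‖ ^ 2 * 1 := (mul_one _).symm
      _ ≤ ‖a n‖ ^ 2 * Real.exp (8 * Real.pi / h - 2 * (2*Real.pi*((n:ℝ)+μ)/h * y)) := by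
          exact mul_le_mul_of_nonneg_left hexp1 (by positivity)
      _ = Real.exp (8 * Real.pi / h) * t n ^ 2 := by
          rw [ht2, show (8 * Real.pi / h - 2 * (2*Real.pi*((n:ℝ)+μ)/h * y))
              = 8 * Real.pi / h + (-(2 * (2*Real.pi*((n:ℝ)+μ)/h * y))) from by ring, Real.exp_add]
          ring
  have hXy : ((y:ℝ) ^ (-B)) ^ 2 = X ^ (2 * B) := by
    rw [hydef, Real.inv_rpow hX0.le, Real.rpow_neg hX0.le, inv_inv, sq, ← Real.rpow_add hX0,
      two_mul]
  calc ∑ n ∈ Finset.range (⌊X⌋₊ + 1), ‖a n‖ ^ 2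
      ≤ ∑ n ∈ Finset.range (⌊X⌋₊ + 1), Real.exp (8 * Real.pi / h) * t n ^ 2 :=
        Finset.sum_le_sum hkey
    _ = Real.exp (8 * Real.pi / h) * ∑ n ∈ Finset.range (⌊X⌋₊ + 1), t n ^ 2 := by
        rw [Finset.mul_sum]
    _ ≤ Real.exp (8 * Real.pi / h) * ∑' n, t n ^ 2 := by
        refine mul_le_mul_of_nonneg_left ?_ (Real.exp_pos _).le
        exact Summable.sum_le_tsum _ (fun i _ => by positivity) hS
    _ ≤ Real.exp (8 * Real.pi / h) * (C * y ^ (-B)) ^ 2 :=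
        mul_le_mul_of_nonneg_left hSbound (Real.exp_pos _).le
    _ = Real.exp (8 * Real.pi / h) * C ^ 2 * X ^ (2 * B) := by
        rw [mul_pow, hXy]
        ring
end

section
/- Let h > 0, μ ∈ [0,1), B ≥ 0, C > 0, and let a : ℕ → ℂ. Suppose that for every τ ∈ ℍ the series Σ_{n=0}^{∞} a_n·exp(2πi(n+μ)τ/h) converges absolutely, and let f(τ) denote its sum. Suppose |f(x+iy)| ≤ C·y^{−B} for every x ∈ ℝ and every y with 0 < y ≤ 1. Then there is a constant C′ > 0 such that |a_n| ≤ C′·(n+1)^B for every n ∈ ℕ. -/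
open MeasureTheory Complex

theorem stmt16 (h : ℝ) (hh : 0 < h) (μ : ℝ) (hμ : μ ∈ Set.Ico (0 : ℝ) 1)
    (B C : ℝ) (hB : 0 ≤ B) (hC : 0 < C) (a : ℕ → ℂ)
    (hsum : ∀ τ : ℂ, 0 < τ.im →
      Summable (fun n : ℕ =>
        Norm.norm (a n * Complex.exp (2 * Real.pi * Complex.I * ((n : ℂ) + μ) * τ / h))))
    (hbd : ∀ x y : ℝ, 0 < y → y ≤ 1 →
      Norm.norm (∑' n : ℕ,
          a n * Complex.exp (2 * Real.pi * Complex.I * ((n : ℂ) + μ) * (x + y * Complex.I) / h))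
        ≤ C * y ^ (-B)) :
    ∃ C' > (0 : ℝ), ∀ n : ℕ, Norm.norm (a n) ≤ C' * ((n : ℝ) + 1) ^ B := by
  refine ⟨C * Real.exp (2 * Real.pi / h), by positivity, fun n => ?_⟩
  have hn1 : (0 : ℝ) < (n : ℝ) + 1 := by positivity
  set y : ℝ := ((n : ℝ) + 1)⁻¹ with hy
  have hy0 : 0 < y := by positivity
  have hy1 : y ≤ 1 := by
    rw [hy]
    exact inv_le_one_of_one_le₀ (le_add_of_nonneg_left (Nat.cast_nonneg n))
  have hh0 : (h : ℂ) ≠ 0 := Complex.ofReal_ne_zero.2 hh.ne'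
  set w : ℕ → ℂ := fun k =>
    2 * Real.pi * Complex.I * ((k : ℂ) + μ) * ((y : ℂ) * Complex.I) / h with hw
  set d : ℕ → ℂ := fun k => 2 * Real.pi * Complex.I * ((k : ℂ) - (n : ℂ)) / h with hd
  set G : ℕ → ℝ → ℂ := fun k x => (a k * Complex.exp (w k)) * Complex.exp (d k * x) with hG
  -- pointwise identity
  have hGeq : ∀ (k : ℕ) (x : ℝ),
      a k * Complex.exp (2 * Real.pi * Complex.I * ((k : ℂ) + μ) * (x + y * Complex.I) / h) *
        Complex.exp (-(2 * Real.pi * Complex.I * ((n : ℂ) + μ) * x / h)) = G k x := by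
    intro k x
    simp only [hG, hw, hd, mul_assoc, ← Complex.exp_add]
    congr 2
    field_simp
    ring
  -- w k as a real number
  have hwk : ∀ k : ℕ, w k = ((-(2 * Real.pi * ((k : ℝ) + μ) * y / h) : ℝ) : ℂ) := by
    intro k
    have h2 : ((-(2 * Real.pi * ((k : ℝ) + μ) * y / h) : ℝ) : ℂ) =
        ((2 * Real.pi * ((k : ℝ) + μ) * y / h : ℝ) : ℂ) * (Complex.I * Complex.I) := by
      rw [Complex.I_mul_I]; push_cast; ring
    rw [hw, h2]; push_cast; ring
  have habsA : ∀ k : ℕ, ‖a k * Complex.exp (w k)‖ =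
      ‖a k‖ * Real.exp (-(2 * Real.pi * ((k : ℝ) + μ) * y / h)) := by
    intro k
    rw [norm_mul, hwk k, Complex.norm_exp, Complex.ofReal_re]
  have hdkx : ∀ (k : ℕ) (x : ℝ), d k * x =
      ((2 * Real.pi * ((k : ℝ) - (n : ℝ)) * x / h : ℝ) : ℂ) * Complex.I := by
    intro k x; rw [hd]; push_cast; ring
  have hnormG : ∀ (k : ℕ) (x : ℝ), ‖G k x‖ = ‖a k * Complex.exp (w k)‖ := by
    intro k x
    rw [hG]
    simp only [norm_mul, hdkx k x, Complex.norm_exp_ofReal_mul_I, mul_one,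
      ← map_mul]
  have hsumw : Summable fun k : ℕ => ‖a k * Complex.exp (w k)‖ := by
    have := hsum ((y : ℂ) * Complex.I) (by simpa using hy0)
    simpa [hw] using this
  have hmeas : ∀ k : ℕ, AEStronglyMeasurable (G k) (volume.restrict (Set.Ioc 0 h)) := by
    intro k
    apply Continuous.aestronglyMeasurable
    exact continuous_const.mul (Complex.continuous_exp.comp
      (continuous_const.mul Complex.continuous_ofReal))
  have hfin : (∑' k : ℕ, ∫⁻ x in Set.Ioc 0 h, ‖G k x‖₊ ∂volume) ≠ ⊤ := by
    have heach : ∀ k : ℕ, (∫⁻ x in Set.Ioc 0 h, ‖G k x‖₊ ∂volume) =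
        (‖a k * Complex.exp (w k)‖₊ : ENNReal) * ENNReal.ofReal h := by
      intro k
      have : ∀ x : ℝ, (‖G k x‖₊ : ENNReal) = (‖a k * Complex.exp (w k)‖₊ : ENNReal) := by
        intro x
        congr 1
        ext
        rw [coe_nnnorm, coe_nnnorm, hnormG k x]
      rw [lintegral_congr fun x => this x, setLIntegral_const, Real.volume_Ioc, sub_zero]
    rw [tsum_congr heach, ENNReal.tsum_mul_right]
    refine ENNReal.mul_ne_top ?_ ENNReal.ofReal_ne_top
    rw [ENNReal.tsum_coe_ne_top_iff_summable, ← NNReal.summable_coe]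
    simpa [coe_nnnorm] using hsumw
  have key : (∫ x in Set.Ioc 0 h, (∑' k : ℕ, G k x) ∂volume) =
      ∑' k : ℕ, ∫ x in Set.Ioc 0 h, G k x ∂volume :=
    MeasureTheory.integral_tsum hmeas hfin
  have hzero : ∀ k : ℕ, k ≠ n → (∫ x in Set.Ioc 0 h, G k x ∂volume) = 0 := by
    intro k hk
    rw [← intervalIntegral.integral_of_le hh.le]
    have hdk : d k ≠ 0 := by
      rw [hd]
      apply div_ne_zero _ hh0
      apply mul_ne_zero
      · simp [Real.pi_ne_zero, Complex.I_ne_zero]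
      · rw [sub_ne_zero]
        exact_mod_cast fun hkn => hk (Nat.cast_injective hkn)
    rw [hG]
    simp only
    rw [intervalIntegral.integral_const_mul, integral_exp_mul_complex hdk]
    have hdh : d k * h = (((k : ℤ) - (n : ℤ) : ℤ) : ℂ) * (2 * Real.pi * Complex.I) := by
      rw [hd]; push_cast; field_simp
    rw [hdh, Complex.exp_int_mul_two_pi_mul_I]
    simp
  have hmain : (∫ x in Set.Ioc 0 h, G n x ∂volume) = h • (a n * Complex.exp (w n)) := by
    rw [← intervalIntegral.integral_of_le hh.le]
    have hdn : d n = 0 := by rw [hd]; simp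
    rw [hG]
    simp only [hdn, zero_mul, Complex.exp_zero, mul_one]
    simp [smul_eq_mul]
    ring
  have hval : (∫ x in Set.Ioc 0 h, (∑' k : ℕ, G k x) ∂volume) =
      h • (a n * Complex.exp (w n)) := by
    rw [key, tsum_eq_single n hzero, hmain]
  have hbound : ‖∫ x in Set.Ioc 0 h, (∑' k : ℕ, G k x) ∂volume‖ ≤
      C * y ^ (-B) * h := by
    rw [← intervalIntegral.integral_of_le hh.le]
    have key2 := intervalIntegral.norm_integral_le_of_norm_le_const
      (C := C * y ^ (-B)) (f := fun x => ∑' k : ℕ, G k x) (a := (0:ℝ)) (b := h) ?_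
    · calc ‖∫ x in (0:ℝ)..h, ∑' k : ℕ, G k x‖ ≤ C * y ^ (-B) * |h - 0| := key2
        _ = C * y ^ (-B) * h := by rw [sub_zero, abs_of_pos hh]
    · intro x _
      show ‖∑' k : ℕ, G k x‖ ≤ C * y ^ (-B)
      have hx : (∑' k : ℕ, G k x) =
          (∑' k : ℕ, a k * Complex.exp (2 * Real.pi * Complex.I * ((k : ℂ) + μ) *
            (x + y * Complex.I) / h)) *
          Complex.exp (-(2 * Real.pi * Complex.I * ((n : ℂ) + μ) * x / h)) := by
        rw [← tsum_mul_right]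
        exact tsum_congr fun k => (hGeq k x).symm
      rw [hx, norm_mul]
      have hre : (-(2 * Real.pi * Complex.I * ((n : ℂ) + μ) * x / h)) =
          ((-(2 * Real.pi * ((n : ℝ) + μ) * x / h) : ℝ) : ℂ) * Complex.I := by
        push_cast; ring
      rw [hre]
      simp only [Complex.norm_exp_ofReal_mul_I, mul_one]
      exact hbd x y hy0 hy1
  have h1 : ‖a n‖ * Real.exp (-(2 * Real.pi * ((n : ℝ) + μ) * y / h)) * h ≤
      C * y ^ (-B) * h := by
    have hb := hbound
    rw [hval] at hb
    calc ‖a n‖ * Real.exp (-(2 * Real.pi * ((n : ℝ) + μ) * y / h)) * h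
        = ‖h • (a n * Complex.exp (w n))‖ := by
          rw [Complex.real_smul, norm_mul, Complex.norm_real, Real.norm_eq_abs, abs_of_pos hh, habsA n]
          ring
      _ ≤ C * y ^ (-B) * h := hb
  have h1' : ‖a n‖ * Real.exp (-(2 * Real.pi * ((n : ℝ) + μ) * y / h)) ≤
      C * y ^ (-B) := le_of_mul_le_mul_right (by linarith) hh
  have h2 : ‖a n‖ ≤
      C * y ^ (-B) * Real.exp (2 * Real.pi * ((n : ℝ) + μ) * y / h) := by
    calc ‖a n‖
        = ‖a n‖ * Real.exp (-(2 * Real.pi * ((n : ℝ) + μ) * y / h)) *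
            Real.exp (2 * Real.pi * ((n : ℝ) + μ) * y / h) := by
          rw [mul_assoc, ← Real.exp_add]; simp
      _ ≤ C * y ^ (-B) * Real.exp (2 * Real.pi * ((n : ℝ) + μ) * y / h) :=
          mul_le_mul_of_nonneg_right h1' (Real.exp_pos _).le
  have hyB : y ^ (-B) = ((n : ℝ) + 1) ^ B := by
    rw [hy, Real.inv_rpow hn1.le, Real.rpow_neg hn1.le, inv_inv]
  have hexple : Real.exp (2 * Real.pi * ((n : ℝ) + μ) * y / h) ≤ Real.exp (2 * Real.pi / h) := by
    apply Real.exp_le_exp.2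
    have hny : ((n : ℝ) + μ) * y ≤ 1 := by
      rw [hy]
      calc ((n : ℝ) + μ) * ((n : ℝ) + 1)⁻¹ ≤ ((n : ℝ) + 1) * ((n : ℝ) + 1)⁻¹ := by
            apply mul_le_mul_of_nonneg_right (by linarith [hμ.2]) (by positivity)
        _ = 1 := mul_inv_cancel₀ hn1.ne'
    have hstep : 2 * Real.pi * ((n : ℝ) + μ) * y ≤ 2 * Real.pi := by
      nlinarith [Real.pi_pos]
    gcongr
  calc ‖a n‖ ≤ C * y ^ (-B) * Real.exp (2 * Real.pi * ((n : ℝ) + μ) * y / h) := h2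
    _ = C * ((n : ℝ) + 1) ^ B * Real.exp (2 * Real.pi * ((n : ℝ) + μ) * y / h) := by rw [hyB]
    _ ≤ C * ((n : ℝ) + 1) ^ B * Real.exp (2 * Real.pi / h) :=
        mul_le_mul_of_nonneg_left hexple (by positivity)
    _ = C * Real.exp (2 * Real.pi / h) * ((n : ℝ) + 1) ^ B := by ring
end

section
/- Let μ > 0, c ≥ 0, C > 0, and let a : ℕ → ℂ satisfy |a_n| ≤ C·(n+1)^c for all n. Let s ∈ ℂ with Re s > c + 1. Then: (i) the Dirichlet series Σ_{n=0}^{∞} a_n·(n+μ)^{−s} converges absolutely; (ii) for every y > 0 the series F(y) = Σ_{n=0}^{∞} a_n·exp(−2π(n+μ)y) converges absolutely; (iii) the function y ↦ F(y)·y^{s−1} is integrable on (0,∞) and ∫₀^∞ F(y)·y^{s−1} dy = (2π)^{−s}·Γ(s)·Σ_{n=0}^{∞} a_n·(n+μ)^{−s}. -/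
open MeasureTheory

open Filter Topology Asymptotics Real Set MeasureTheory
open Complex

lemma my_integrable_tsum {α : Type*} [MeasurableSpace α]
    {ν : Measure α} {F : ℕ → α → ℂ}
    (hF_int : ∀ i, Integrable (F i) ν)
    (hF_sum : Summable fun i ↦ ∫ a, ‖F i a‖ ∂ν) :
    Integrable (fun a => ∑' i, F i a) ν := by
  have h1 : ∀ i, AEMeasurable (fun x => (‖F i x‖₊ : ENNReal)) ν :=
    fun i => (hF_int i).aestronglyMeasurable.enorm
  have key : ∑' i, ∫⁻ a, ‖F i a‖₊ ∂ν ≠ ⊤ := by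
    have h2 : ∀ i, ∫⁻ a, ‖F i a‖₊ ∂ν = ENNReal.ofReal (∫ a, ‖F i a‖ ∂ν) := fun i =>
      (ofReal_integral_norm_eq_lintegral_enorm (hF_int i)).symm
    rw [funext h2, ← ENNReal.ofReal_tsum_of_nonneg
      (fun i => integral_nonneg fun x => norm_nonneg _) hF_sum]
    exact ENNReal.ofReal_ne_top
  have hhh : ∀ᵐ x ∂ν, Summable fun n => F n x := by
    have key' := key
    rw [← lintegral_tsum h1] at key'
    refine (ae_lt_top' (AEMeasurable.ennreal_tsum h1) key').mono fun x hx => ?_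
    exact Summable.of_nnnorm
      (NNReal.summable_coe.mp (ENNReal.tsum_coe_ne_top_iff_summable_coe.mp hx.ne))
  refine ⟨?_, ?_⟩
  · refine aestronglyMeasurable_of_tendsto_ae atTop
      (f := fun N x => ∑ i ∈ Finset.range N, F i x)
      (fun N => Finset.aestronglyMeasurable_fun_sum _ fun i _ => (hF_int i).aestronglyMeasurable) ?_
    filter_upwards [hhh] with x hx
    exact hx.hasSum.tendsto_sum_nat
  · show (∫⁻ x, ‖∑' i, F i x‖₊ ∂ν) < ⊤
    calc ∫⁻ x, ‖∑' i, F i x‖₊ ∂ν ≤ ∫⁻ x, ∑' i, (‖F i x‖₊ : ENNReal) ∂ν := by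
          refine lintegral_mono fun x => ?_
          rcases eq_or_ne (∑' i, (‖F i x‖₊ : ENNReal)) ⊤ with h | h
          · rw [h]; exact le_top
          · have hsm := ENNReal.tsum_coe_ne_top_iff_summable.mp h
            rw [← ENNReal.coe_tsum hsm]
            exact ENNReal.coe_le_coe.mpr (nnnorm_tsum_le hsm)
      _ = ∑' i, ∫⁻ x, ‖F i x‖₊ ∂ν := lintegral_tsum h1
      _ < ⊤ := key.lt_top

theorem stmt17 (μ : ℝ) (hμ : 0 < μ) (c C : ℝ) (hc : 0 ≤ c) (hC : 0 < C)
    (a : ℕ → ℂ) (ha : ∀ n : ℕ, ‖a n‖ ≤ C * ((n : ℝ) + 1) ^ c)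
    (s : ℂ) (hs : c + 1 < s.re) :
    Summable (fun n : ℕ => ‖a n * ((n : ℂ) + μ) ^ (-s)‖) ∧
    (∀ y : ℝ, 0 < y →
      Summable (fun n : ℕ =>
        ‖a n * Complex.exp (-(2 * Real.pi * ((n : ℂ) + μ) * y))‖)) ∧
    IntegrableOn
      (fun y : ℝ =>
        (∑' n : ℕ, a n * Complex.exp (-(2 * Real.pi * ((n : ℂ) + μ) * y))) * (y : ℂ) ^ (s - 1))
      (Set.Ioi (0 : ℝ)) ∧
    ∫ y in Set.Ioi (0 : ℝ),
        (∑' n : ℕ, a n * Complex.exp (-(2 * Real.pi * ((n : ℂ) + μ) * y))) * (y : ℂ) ^ (s - 1)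
      = ((2 * Real.pi : ℝ) : ℂ) ^ (-s) * Complex.Gamma s
          * ∑' n : ℕ, a n * ((n : ℂ) + μ) ^ (-s) := by
  have hs0 : 0 < s.re := by linarith
  have hμn : ∀ n : ℕ, (0:ℝ) < (n:ℝ) + μ := fun n => by positivity
  set p : ℕ → ℝ := fun n => 2 * π * ((n:ℝ) + μ) with hp_def
  have hp : ∀ n, 0 < p n := fun n => by
    have := pi_pos
    have := hμn n
    positivity
  -- basic summability
  have S1 : Summable (fun n : ℕ => ‖a n‖ / ((n:ℝ) + μ) ^ s.re) := by
    set m : ℝ := min 1 μ with hm_def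
    have hm : 0 < m := lt_min one_pos hμ
    have hble : ∀ n : ℕ, ‖a n‖ / ((n:ℝ) + μ) ^ s.re ≤
        (C / m ^ s.re) * ((n:ℝ) + 1) ^ (c - s.re) := by
      intro n
      have h1 : (0:ℝ) < (n:ℝ) + 1 := by positivity
      have hden : m ^ s.re * ((n:ℝ) + 1) ^ s.re ≤ ((n:ℝ) + μ) ^ s.re := by
        rw [← Real.mul_rpow hm.le h1.le]
        refine Real.rpow_le_rpow (by positivity) ?_ hs0.le
        have h2 : m ≤ 1 := min_le_left _ _
        have h3 : m ≤ μ := min_le_right _ _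
        nlinarith [Nat.cast_nonneg (α := ℝ) n]
      calc ‖a n‖ / ((n:ℝ) + μ) ^ s.re
          ≤ (C * ((n:ℝ) + 1) ^ c) / (m ^ s.re * ((n:ℝ) + 1) ^ s.re) := by
            apply div_le_div₀ (by positivity) (ha n) (by positivity) hden
        _ = (C / m ^ s.re) * ((n:ℝ) + 1) ^ (c - s.re) := by
            rw [Real.rpow_sub h1]
            field_simp
    have hsum : Summable (fun n : ℕ => (C / m ^ s.re) * ((n:ℝ) + 1) ^ (c - s.re)) := by
      apply Summable.mul_left
      have : Summable (fun n : ℕ => (n:ℝ) ^ (c - s.re)) :=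
        Real.summable_nat_rpow.mpr (by linarith)
      have := (summable_nat_add_iff 1).mpr this
      simpa using this
    exact Summable.of_nonneg_of_le (fun n => by positivity) hble hsum
  -- goal 1
  have G1 : Summable (fun n : ℕ => ‖a n * ((n : ℂ) + μ) ^ (-s)‖) := by
    refine S1.congr fun n => ?_
    rw [norm_mul]
    congr 1
    have : ((n : ℂ) + μ) = (((n:ℝ) + μ : ℝ) : ℂ) := by push_cast; ring
    rw [this, Complex.norm_cpow_eq_rpow_re_of_pos (hμn n), Complex.neg_re,
      Real.rpow_neg (hμn n).le, div_eq_mul_inv]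
  -- goal 2 : summability for fixed y
  have G2 : ∀ y : ℝ, 0 < y → Summable (fun n : ℕ =>
      ‖a n‖ * Real.exp (-(p n) * y)) := by
    intro y hy
    set r : ℝ := Real.exp (-(2 * π * y)) with hr_def
    have hr1 : r < 1 := Real.exp_lt_one_iff.mpr (by
      have := pi_pos; nlinarith)
    have hr0 : 0 < r := Real.exp_pos _
    set k : ℕ := ⌈c⌉₊ with hk_def
    have hble : ∀ n : ℕ, ‖a n‖ * Real.exp (-(p n) * y) ≤
        (C * Real.exp (-(2 * π * μ * y))) * (((n:ℝ) + 1) ^ k * r ^ n) := by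
      intro n
      have h1 : (1:ℝ) ≤ (n:ℝ) + 1 := by simp
      have hnc : ((n:ℝ) + 1) ^ c ≤ ((n:ℝ) + 1) ^ (k:ℝ) :=
        Real.rpow_le_rpow_of_exponent_le h1 (Nat.le_ceil c)
      have hexp : Real.exp (-(p n) * y) = Real.exp (-(2 * π * μ * y)) * r ^ n := by
        rw [← Real.exp_nat_mul, ← Real.exp_add]
        congr 1
        simp only [hp_def]
        ring
      calc ‖a n‖ * Real.exp (-(p n) * y)
          ≤ (C * ((n:ℝ) + 1) ^ c) * Real.exp (-(p n) * y) := by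
            exact mul_le_mul_of_nonneg_right (ha n) (Real.exp_pos _).le
        _ ≤ (C * ((n:ℝ) + 1) ^ (k:ℝ)) * Real.exp (-(p n) * y) :=
            mul_le_mul_of_nonneg_right (mul_le_mul_of_nonneg_left hnc hC.le)
              (Real.exp_pos _).le
        _ = (C * Real.exp (-(2 * π * μ * y))) * (((n:ℝ) + 1) ^ k * r ^ n) := by
            rw [hexp, Real.rpow_natCast]
            ring
    have hsum : Summable (fun n : ℕ => (C * Real.exp (-(2 * π * μ * y)))
        * (((n:ℝ) + 1) ^ k * r ^ n)) := by
      apply Summable.mul_left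
      have h0 : Summable (fun n : ℕ => (n:ℝ) ^ k * r ^ n) := by
        have := summable_pow_mul_geometric_of_norm_lt_one (R := ℝ) k
          (r := r) (by rwa [Real.norm_eq_abs, abs_of_pos hr0])
        simpa using this
      have h1 : Summable (fun n : ℕ => ((n:ℝ) + 1) ^ k * r ^ (n + 1)) := by
        have := (summable_nat_add_iff 1).mpr h0
        simpa using this
      have h2 : Summable (fun n : ℕ => r⁻¹ * (((n:ℝ) + 1) ^ k * r ^ (n + 1))) :=
        h1.mul_left _
      refine h2.congr fun n => ?_
      rw [pow_succ]
      field_simp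
    exact Summable.of_nonneg_of_le (fun n => by positivity) hble hsum
  -- exp rewriting
  have hexp_eq : ∀ (n : ℕ) (y : ℝ),
      Complex.exp (-(2 * Real.pi * ((n : ℂ) + μ) * y)) = (Real.exp (-(p n) * y) : ℝ) := by
    intro n y
    rw [Complex.ofReal_exp]
    congr 1
    simp only [hp_def]
    push_cast
    ring
  have G2' : ∀ y : ℝ, 0 < y → Summable (fun n : ℕ =>
      ‖a n * Complex.exp (-(2 * Real.pi * ((n : ℂ) + μ) * y))‖) := by
    intro y hy
    refine (G2 y hy).congr fun n => ?_
    rw [norm_mul, hexp_eq n y, Complex.norm_real, Real.norm_eq_abs, abs_of_pos (Real.exp_pos _)]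
  -- summability of norms needed for integral manipulations
  have h_sum : Summable fun n : ℕ => ‖a n‖ / p n ^ s.re := by
    have heq : ∀ n : ℕ, ((2 * π) ^ s.re)⁻¹ * (‖a n‖ / ((n:ℝ) + μ) ^ s.re)
        = ‖a n‖ / p n ^ s.re := by
      intro n
      have h2π : (0:ℝ) < 2 * π := by positivity
      simp only [hp_def]
      rw [Real.mul_rpow h2π.le (hμn n).le]
      field_simp
    exact (S1.mul_left _).congr heq
  -- integrability of each term
  have A : ∀ n : ℕ, IntegrableOn
      (fun t : ℝ => (t:ℂ) ^ (s - 1) * (a n * (Real.exp (-p n * t) : ℝ))) (Ioi 0) := by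
    intro n
    have hpi := hp n
    simp_rw [← mul_assoc, mul_comm _ (a n), mul_assoc]
    have h := Complex.GammaIntegral_convergent hs0
    rw [← mul_zero (p n), ← integrableOn_Ioi_comp_mul_left_iff _ _ hpi] at h
    refine (IntegrableOn.congr_fun (h.const_mul (1 / (p n : ℂ) ^ (s - 1)))
      (fun t (ht : 0 < t) ↦ ?_) measurableSet_Ioi).const_mul _
    simp_rw [mul_comm (↑(Real.exp _) : ℂ), ← mul_assoc, neg_mul, Complex.ofReal_mul]
    rw [mul_cpow_ofReal_nonneg hpi.le ht.le, ← mul_assoc, one_div, inv_mul_cancel₀, one_mul]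
    rw [Ne, Complex.cpow_eq_zero_iff, not_and_or]
    exact Or.inl (Complex.ofReal_ne_zero.mpr hpi.ne')
  -- value of the norm integrals
  have Bcalc : ∀ n : ℕ, ∫ t : ℝ in Ioi 0, ‖(t:ℂ) ^ (s - 1) * (a n * (Real.exp (-p n * t) : ℝ))‖
      = ‖a n‖ * ((1 / p n) ^ s.re * Real.Gamma s.re) := by
    intro n
    rw [← Real.integral_rpow_mul_exp_neg_mul_Ioi hs0 (hp n), ← integral_const_mul]
    refine setIntegral_congr_fun measurableSet_Ioi fun t ht => ?_
    rw [norm_mul, norm_mul,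
      Complex.norm_cpow_eq_rpow_re_of_pos ht, Complex.sub_re, Complex.one_re,
      Complex.norm_real, Real.norm_eq_abs, Real.abs_exp, neg_mul]
    ring
  have B : Summable fun n : ℕ =>
      ∫ t : ℝ in Ioi 0, ‖(t:ℂ) ^ (s - 1) * (a n * (Real.exp (-p n * t) : ℝ))‖ := by
    rw [funext Bcalc]
    have : Summable fun n : ℕ => (‖a n‖ / p n ^ s.re) * Real.Gamma s.re :=
      h_sum.mul_right _
    refine this.congr fun n => ?_
    rw [one_div, Real.inv_rpow (hp n).le]
    field_simp
  -- pointwise identification of the integrand with the tsum of terms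
  have hfun : ∀ y : ℝ,
      (∑' n : ℕ, a n * Complex.exp (-(2 * Real.pi * ((n : ℂ) + μ) * y))) * (y : ℂ) ^ (s - 1)
      = ∑' n : ℕ, (y:ℂ) ^ (s - 1) * (a n * (Real.exp (-p n * y) : ℝ)) := by
    intro y
    rw [← tsum_mul_right]
    refine tsum_congr fun n => ?_
    rw [hexp_eq n y]
    ring
  have hIntOn : IntegrableOn
      (fun y : ℝ =>
        (∑' n : ℕ, a n * Complex.exp (-(2 * Real.pi * ((n : ℂ) + μ) * y))) * (y : ℂ) ^ (s - 1))
      (Ioi 0) := by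
    have := my_integrable_tsum (ν := volume.restrict (Ioi 0)) A B
    refine this.congr ?_
    exact Filter.Eventually.of_forall fun y => (hfun y).symm
  refine ⟨G1, G2', hIntOn, ?_⟩
  -- value of each term integral
  have hIv : ∀ n : ℕ, ∫ t : ℝ in Ioi 0, (t:ℂ) ^ (s - 1) * (a n * (Real.exp (-p n * t) : ℝ))
      = ((2 * Real.pi : ℝ) : ℂ) ^ (-s) * Complex.Gamma s * (a n * ((n : ℂ) + μ) ^ (-s)) := by
    intro n
    have h1 : ∫ t : ℝ in Ioi 0, (t:ℂ) ^ (s - 1) * (a n * (Real.exp (-p n * t) : ℝ))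
        = a n * ∫ t : ℝ in Ioi 0, (t:ℂ) ^ (s - 1) * Complex.exp (-(p n * t)) := by
      rw [← integral_const_mul]
      refine setIntegral_congr_fun measurableSet_Ioi fun t ht => ?_
      rw [Complex.ofReal_exp]
      push_cast
      ring
    rw [h1, integral_cpow_mul_exp_neg_mul_Ioi hs0 (hp n)]
    have hargp : Complex.arg ((p n : ℝ) : ℂ) ≠ Real.pi := by
      rw [Complex.arg_ofReal_of_nonneg (hp n).le]
      exact Real.pi_pos.ne
    have hnμ : ((((n:ℝ) + μ) : ℝ) : ℂ) = ((n : ℂ) + μ) := by push_cast; ring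
    have hsplit : ((p n : ℝ) : ℂ) = ((2 * Real.pi : ℝ) : ℂ) * ((((n:ℝ) + μ) : ℝ) : ℂ) := by
      simp only [hp_def]
      push_cast
      ring
    have h2 : (1 / ((p n : ℝ) : ℂ)) ^ s
        = ((2 * Real.pi : ℝ) : ℂ) ^ (-s) * ((n : ℂ) + μ) ^ (-s) := by
      rw [one_div, Complex.inv_cpow _ _ hargp, ← Complex.cpow_neg, hsplit,
        mul_cpow_ofReal_nonneg (by positivity) (hμn n).le, hnμ]
    rw [h2]
    ring
  calc ∫ y : ℝ in Ioi 0,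
        (∑' n : ℕ, a n * Complex.exp (-(2 * Real.pi * ((n : ℂ) + μ) * y))) * (y : ℂ) ^ (s - 1)
      = ∫ y : ℝ in Ioi 0, ∑' n : ℕ, (y:ℂ) ^ (s - 1) * (a n * (Real.exp (-p n * y) : ℝ)) := by
        simp only [hfun]
    _ = ∑' n : ℕ, ∫ t : ℝ in Ioi 0, (t:ℂ) ^ (s - 1) * (a n * (Real.exp (-p n * t) : ℝ)) :=
        ((hasSum_integral_of_summable_integral_norm A B).tsum_eq).symm
    _ = ∑' n : ℕ, ((2 * Real.pi : ℝ) : ℂ) ^ (-s) * Complex.Gamma s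
          * (a n * ((n : ℂ) + μ) ^ (-s)) := tsum_congr hIv
    _ = ((2 * Real.pi : ℝ) : ℂ) ^ (-s) * Complex.Gamma s
          * ∑' n : ℕ, a n * ((n : ℂ) + μ) ^ (-s) := tsum_mul_left
end
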